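/- arXiv:2502.20403 — 3 statements merged into one kernel-verified Lean document; each statement's English description precedes it below -/
import Mathlib

section
/- Let d, d_a be natural numbers, d₊ = d + d_a, and N = 2^{d₊}. Let E₁, …, E_n be Kraus-form quantum channels on N×N complex matrices, let Û₀ be a 2^d×2^d unitary matrix, and let Û₁, …, Û_n be N×N unitary matrices. Let σ be a 2^d×2^d density matrix, let a ∈ ℂ^{2^{d_a}} be a unit vector, and let Π be an N×N matrix with 0 ≤ Π ≤ I. Define y = Tr(Π · (E_n ∘ ⋯ ∘ E₁)(σ ⊗ aaᴴ)) and ŷ = Tr(Π · (Ad_{Û_n} ∘ E_n ∘ ⋯ ∘ Ad_{Û₁} ∘ E₁)((Û₀ σ Û₀ᴴ) ⊗ aaᴴ)), where Ad_U(ρ) = U ρ Uᴴ and ⊗ is the Kronecker product. Then |y − ŷ| ≤ inf_{φ₀ ∈ ℂ, |φ₀| = 1} ‖I_{2^d} − φ₀ Û₀‖₂ + Σ_{i=1}^n inf_{φ_i ∈ ℂ, |φ_i| = 1} ‖I_N − φ_i Û_i‖₂. -/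
open Matrix
open scoped Kronecker ComplexOrder

/-- The Frobenius (Hilbert–Schmidt) norm of a complex matrix. -/
noncomputable def frobNorm {m n : ℕ} (A : Matrix (Fin m) (Fin n) ℂ) : ℝ :=
  Real.sqrt (∑ i, ∑ j, ‖A i j‖ ^ 2)

/-- A Kraus-form quantum channel: `Φ ρ = ∑ j, K j * ρ * (K j)ᴴ` for a finite family
of matrices with `∑ j, (K j)ᴴ * K j = 1`. -/
def IsKrausChannel {N : ℕ}
    (Φ : Matrix (Fin N) (Fin N) ℂ → Matrix (Fin N) (Fin N) ℂ) : Prop :=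
  ∃ (m : ℕ) (K : Fin m → Matrix (Fin N) (Fin N) ℂ),
    (∑ j, (K j)ᴴ * K j = 1) ∧ ∀ ρ, Φ ρ = ∑ j, K j * ρ * (K j)ᴴ

namespace Cor1

variable {N : ℕ}

noncomputable def vnorm {k : ℕ} (x : Fin k → ℂ) : ℝ := Real.sqrt (∑ i, ‖x i‖ ^ 2)

lemma vnorm_nonneg {k : ℕ} (x : Fin k → ℂ) : 0 ≤ vnorm x := Real.sqrt_nonneg _

lemma sq_vnorm {k : ℕ} (x : Fin k → ℂ) : vnorm x ^ 2 = ∑ i, ‖x i‖ ^ 2 :=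
  Real.sq_sqrt (Finset.sum_nonneg fun i _ => sq_nonneg _)

lemma vnorm_triangle {k : ℕ} (x y : Fin k → ℂ) :
    |vnorm x - vnorm y| ≤ vnorm (x - y) := by
  have h := abs_norm_sub_norm_le (E := EuclideanSpace ℂ (Fin k)) (WithLp.toLp 2 x) (WithLp.toLp 2 y)
  rw [EuclideanSpace.norm_eq, EuclideanSpace.norm_eq, ← WithLp.toLp_sub, EuclideanSpace.norm_eq] at h
  exact h

/-- quadratic form of a matrix -/
noncomputable def qf (Q : Matrix (Fin N) (Fin N) ℂ) (v : Fin N → ℂ) : ℂ :=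
  star v ⬝ᵥ (Q *ᵥ v)

lemma qf_conj_mul (B : Matrix (Fin N) (Fin N) ℂ) (v : Fin N → ℂ) :
    qf (Bᴴ * B) v = ((vnorm (B *ᵥ v) ^ 2 : ℝ) : ℂ) := by
  unfold qf
  rw [← mulVec_mulVec, dotProduct_mulVec, ← star_mulVec, sq_vnorm]
  simp only [dotProduct, Pi.star_apply, RCLike.star_def, RCLike.conj_mul]
  push_cast
  rfl

lemma qf_one (v : Fin N → ℂ) : qf 1 v = ((vnorm v ^ 2 : ℝ) : ℂ) := by
  have h := qf_conj_mul (1 : Matrix (Fin N) (Fin N) ℂ) v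
  simpa using h

lemma qf_add (Q R : Matrix (Fin N) (Fin N) ℂ) (v : Fin N → ℂ) :
    qf (Q + R) v = qf Q v + qf R v := by
  unfold qf
  rw [add_mulVec, dotProduct_add]

lemma real_core {a a' b b' s t δ : ℝ} (ha : 0 ≤ a) (ha' : 0 ≤ a') (hb : 0 ≤ b) (hb' : 0 ≤ b')
    (hs : 0 ≤ s) (ht : 0 ≤ t) (hδ : 0 ≤ δ)
    (h1 : a ^ 2 + b ^ 2 = 1) (h2 : a' ^ 2 + b' ^ 2 = 1) (h3 : s ^ 2 + t ^ 2 = δ ^ 2)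
    (h4 : |a - a'| ≤ s) (h5 : |b - b'| ≤ t) : |a ^ 2 - a' ^ 2| ≤ δ := by
  have h4' : (a - a') ^ 2 ≤ s ^ 2 := by
    rw [← sq_abs (a - a')]
    exact pow_le_pow_left₀ (abs_nonneg _) h4 2
  have h5' : (b - b') ^ 2 ≤ t ^ 2 := by
    rw [← sq_abs (b - b')]
    exact pow_le_pow_left₀ (abs_nonneg _) h5 2
  have e1 : (a ^ 2 - a' ^ 2) ^ 2 ≤ s ^ 2 * (a + a') ^ 2 := by
    have h := mul_le_mul_of_nonneg_right h4' (sq_nonneg (a + a'))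
    nlinarith [h]
  have e2 : (a ^ 2 - a' ^ 2) ^ 2 ≤ t ^ 2 * (b + b') ^ 2 := by
    have hd : a ^ 2 - a' ^ 2 = b' ^ 2 - b ^ 2 := by linarith
    have h := mul_le_mul_of_nonneg_right h5' (sq_nonneg (b + b'))
    rw [hd]; nlinarith [h]
  have hab : (a + a') * (b + b') ≤ 2 := by
    nlinarith [sq_nonneg (a - b), sq_nonneg (a - b'), sq_nonneg (a' - b), sq_nonneg (a' - b')]
  have hst : s * t ≤ δ ^ 2 / 2 := by nlinarith [sq_nonneg (s - t)]
  have habn : 0 ≤ (a + a') * (b + b') := by positivity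
  have hstn : 0 ≤ s * t := mul_nonneg hs ht
  have m2 : s * t * ((a + a') * (b + b')) ≤ δ ^ 2 :=
    (mul_le_mul hst hab habn (by positivity)).trans_eq (by ring)
  have m1 : (a ^ 2 - a' ^ 2) ^ 2 * (a ^ 2 - a' ^ 2) ^ 2 ≤
      (s ^ 2 * (a + a') ^ 2) * (t ^ 2 * (b + b') ^ 2) :=
    mul_le_mul e1 e2 (sq_nonneg _) (by positivity)
  have m4 : ((a ^ 2 - a' ^ 2) ^ 2) ^ 2 ≤ (δ ^ 2) ^ 2 := by
    have m2' : (s * t * ((a + a') * (b + b'))) ^ 2 ≤ (δ ^ 2) ^ 2 :=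
      pow_le_pow_left₀ (mul_nonneg hstn habn) m2 2
    calc ((a ^ 2 - a' ^ 2) ^ 2) ^ 2
        = (a ^ 2 - a' ^ 2) ^ 2 * (a ^ 2 - a' ^ 2) ^ 2 := by ring
      _ ≤ (s ^ 2 * (a + a') ^ 2) * (t ^ 2 * (b + b') ^ 2) := m1
      _ = (s * t * ((a + a') * (b + b'))) ^ 2 := by ring
      _ ≤ (δ ^ 2) ^ 2 := m2'
  have m5 : (a ^ 2 - a' ^ 2) ^ 2 ≤ δ ^ 2 :=
    le_of_pow_le_pow_left₀ two_ne_zero (sq_nonneg δ) m4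
  have m6 : |a ^ 2 - a' ^ 2| ^ 2 ≤ δ ^ 2 := by rwa [sq_abs]
  exact le_of_pow_le_pow_left₀ two_ne_zero hδ m6

lemma pure_step {Q : Matrix (Fin N) (Fin N) ℂ} (hQ : Q.PosSemidef) (hQ' : (1 - Q).PosSemidef)
    (v w : Fin N → ℂ) (hv : vnorm v = 1) (hw : vnorm w = 1) :
    ‖qf Q v - qf Q w‖ ≤ vnorm (v - w) := by
  obtain ⟨B, hB⟩ : ∃ B : Matrix (Fin N) (Fin N) ℂ, Q = Bᴴ * B := by
    open scoped MatrixOrder in exact CStarAlgebra.nonneg_iff_eq_star_mul_self.mp hQ.nonneg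
  obtain ⟨C, hC⟩ : ∃ C : Matrix (Fin N) (Fin N) ℂ, 1 - Q = Cᴴ * C := by
    open scoped MatrixOrder in exact CStarAlgebra.nonneg_iff_eq_star_mul_self.mp hQ'.nonneg
  have hsplit : ∀ x : Fin N → ℂ,
      vnorm (B *ᵥ x) ^ 2 + vnorm (C *ᵥ x) ^ 2 = vnorm x ^ 2 := by
    intro x
    have h : qf Q x + qf (1 - Q) x = qf 1 x := by
      rw [← qf_add]; norm_num
    rw [hC, hB, qf_conj_mul, qf_conj_mul, qf_one] at h
    exact_mod_cast h
  have h4 : |vnorm (B *ᵥ v) - vnorm (B *ᵥ w)| ≤ vnorm (B *ᵥ (v - w)) := by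
    rw [mulVec_sub]; exact vnorm_triangle _ _
  have h5 : |vnorm (C *ᵥ v) - vnorm (C *ᵥ w)| ≤ vnorm (C *ᵥ (v - w)) := by
    rw [mulVec_sub]; exact vnorm_triangle _ _
  have key : |vnorm (B *ᵥ v) ^ 2 - vnorm (B *ᵥ w) ^ 2| ≤ vnorm (v - w) := by
    refine real_core (vnorm_nonneg _) (vnorm_nonneg _) (vnorm_nonneg _) (vnorm_nonneg _)
      (vnorm_nonneg _) (vnorm_nonneg _) (vnorm_nonneg _) ?_ ?_ ?_ h4 h5
    · rw [hsplit v, hv]; norm_num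
    · rw [hsplit w, hw]; norm_num
    · exact hsplit (v - w)
  have hqv : qf Q v = ((vnorm (B *ᵥ v) ^ 2 : ℝ) : ℂ) := by rw [hB, qf_conj_mul]
  have hqw : qf Q w = ((vnorm (B *ᵥ w) ^ 2 : ℝ) : ℂ) := by rw [hB, qf_conj_mul]
  rw [hqv, hqw, ← Complex.ofReal_sub, Complex.norm_real, Real.norm_eq_abs]
  exact key

lemma vnorm_mulVec_le {m n : ℕ} (A : Matrix (Fin m) (Fin n) ℂ) (v : Fin n → ℂ)
    (hv : vnorm v = 1) : vnorm (A *ᵥ v) ≤ frobNorm A := by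
  unfold vnorm frobNorm
  apply Real.sqrt_le_sqrt
  apply Finset.sum_le_sum
  intro i _
  have h1 : ‖(A *ᵥ v) i‖ ≤ ∑ j, ‖A i j‖ * ‖v j‖ := by
    calc ‖(A *ᵥ v) i‖ = ‖∑ j, A i j * v j‖ := rfl
      _ ≤ ∑ j, ‖A i j * v j‖ := norm_sum_le _ _
      _ = ∑ j, ‖A i j‖ * ‖v j‖ := by simp [norm_mul]
  have hv2 : ∑ j, ‖v j‖ ^ 2 = 1 := by
    have := sq_vnorm v; rw [hv] at this; simpa using this.symm
  calc ‖(A *ᵥ v) i‖ ^ 2 ≤ (∑ j, ‖A i j‖ * ‖v j‖) ^ 2 :=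
        pow_le_pow_left₀ (norm_nonneg _) h1 2
    _ ≤ (∑ j, ‖A i j‖ ^ 2) * (∑ j, ‖v j‖ ^ 2) := Finset.sum_mul_sq_le_sq_mul_sq _ _ _
    _ = ∑ j, ‖A i j‖ ^ 2 := by rw [hv2, mul_one]


lemma trace_mul_vecMulVec (Q : Matrix (Fin N) (Fin N) ℂ) (z : Fin N → ℂ) :
    (Q * vecMulVec z (star z)).trace = qf Q z := by
  unfold qf
  simp only [trace, diag_apply, mul_apply, vecMulVec_apply, Pi.star_apply,
    dotProduct, mulVec, Finset.mul_sum]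
  exact Finset.sum_congr rfl fun p _ => Finset.sum_congr rfl fun q _ => by ring

lemma conj_vecMulVec (V : Matrix (Fin N) (Fin N) ℂ) (z : Fin N → ℂ) :
    V * vecMulVec z (star z) * Vᴴ = vecMulVec (V *ᵥ z) (star (V *ᵥ z)) := by
  ext p q
  simp only [mul_apply, vecMulVec_apply, conjTranspose_apply, Pi.star_apply, mulVec,
    dotProduct, star_sum, star_mul', Finset.sum_mul, Finset.mul_sum]
  exact Finset.sum_congr rfl fun k _ => Finset.sum_congr rfl fun l _ => by ring

lemma psd_decomp {τ : Matrix (Fin N) (Fin N) ℂ} (hτ : τ.PosSemidef) :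
    ∃ (lam : Fin N → ℝ) (u : Fin N → Fin N → ℂ),
      (∀ i, 0 ≤ lam i) ∧ ((∑ i, (lam i : ℂ)) = τ.trace) ∧
      (∀ i, ∑ j, ‖u i j‖ ^ 2 = 1) ∧
      τ = ∑ i, ((lam i : ℂ)) • vecMulVec (u i) (star (u i)) := by
  have hH := hτ.1
  set W : Matrix (Fin N) (Fin N) ℂ := (hH.eigenvectorUnitary : Matrix (Fin N) (Fin N) ℂ)
  have hWu : star W * W = 1 := mem_unitaryGroup_iff'.mp hH.eigenvectorUnitary.2
  refine ⟨hH.eigenvalues, fun i j => W j i, hτ.eigenvalues_nonneg, ?_, ?_, ?_⟩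
  · have h := hH.spectral_theorem
    calc (∑ i, ((hH.eigenvalues i : ℝ) : ℂ))
        = (diagonal (RCLike.ofReal ∘ hH.eigenvalues) : Matrix (Fin N) (Fin N) ℂ).trace := by
          rw [trace_diagonal]; rfl
      _ = τ.trace := by
          conv_rhs => rw [h, Unitary.conjStarAlgAut_apply]
          rw [trace_mul_cycle, hWu, one_mul]
  · intro i
    have h := congrFun (congrFun hWu i) i
    simp only [mul_apply, star_apply, one_apply_eq, RCLike.star_def, RCLike.conj_mul] at h
    have : ((∑ j, ‖W j i‖ ^ 2 : ℝ) : ℂ) = 1 := by push_cast; exact h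
    exact_mod_cast this
  · conv_lhs => rw [hH.spectral_theorem, Unitary.conjStarAlgAut_apply]
    ext p q
    rw [mul_apply, Matrix.sum_apply]
    refine Finset.sum_congr rfl fun k _ => ?_
    rw [mul_diagonal, star_apply]
    simp only [Matrix.smul_apply, vecMulVec_apply, Pi.star_apply, smul_eq_mul,
      Function.comp_apply, RCLike.ofReal, Complex.coe_algebraMap]
    ring


lemma unit_smul_unitary {V : Matrix (Fin N) (Fin N) ℂ} (hV : V ∈ unitaryGroup (Fin N) ℂ)
    {φ : ℂ} (hφ : ‖φ‖ = 1) : star (φ • V) * (φ • V) = 1 := by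
  rw [star_smul, smul_mul_smul_comm]
  have h1 : star φ * φ = 1 := by
    rw [RCLike.star_def, RCLike.conj_mul, hφ]; norm_num
  rw [h1, mem_unitaryGroup_iff'.mp hV, one_smul]

lemma vnorm_eq_one_of {k : ℕ} {x : Fin k → ℂ} (h : ∑ j, ‖x j‖ ^ 2 = 1) : vnorm x = 1 := by
  rw [vnorm, h, Real.sqrt_one]

lemma vnorm_mulVec_unitary {W : Matrix (Fin N) (Fin N) ℂ} (hW : star W * W = 1)
    (x : Fin N → ℂ) : vnorm (W *ᵥ x) = vnorm x := by
  have h : qf (Wᴴ * W) x = qf 1 x := by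
    rw [← Matrix.star_eq_conjTranspose, hW]
  rw [qf_conj_mul, qf_one] at h
  have h2 : vnorm (W *ᵥ x) ^ 2 = vnorm x ^ 2 := by exact_mod_cast h
  calc vnorm (W *ᵥ x) = Real.sqrt (vnorm (W *ᵥ x) ^ 2) :=
        (Real.sqrt_sq (vnorm_nonneg _)).symm
    _ = Real.sqrt (vnorm x ^ 2) := by rw [h2]
    _ = vnorm x := Real.sqrt_sq (vnorm_nonneg _)

lemma qf_unit_smul {Q : Matrix (Fin N) (Fin N) ℂ} {φ : ℂ} (hφ : ‖φ‖ = 1) (x : Fin N → ℂ) :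
    qf Q (φ • x) = qf Q x := by
  unfold qf
  rw [star_smul, mulVec_smul, smul_dotProduct, dotProduct_smul, smul_smul, RCLike.star_def,
    RCLike.conj_mul, hφ]
  norm_num

lemma key_step {Q τ V : Matrix (Fin N) (Fin N) ℂ} (hQ : Q.PosSemidef) (hQ' : (1 - Q).PosSemidef)
    (hτ : τ.PosSemidef) (hτt : τ.trace = 1) (hV : V ∈ unitaryGroup (Fin N) ℂ)
    (φ : ℂ) (hφ : ‖φ‖ = 1) :
    ‖(Q * τ).trace - (Q * (V * τ * Vᴴ)).trace‖ ≤ frobNorm (1 - φ • V) := by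
  obtain ⟨lam, u, hlam0, hlamt, hu1, hdec⟩ := psd_decomp hτ
  have hWu : star (φ • V) * (φ • V) = 1 := unit_smul_unitary hV hφ
  have hconj : V * τ * Vᴴ = ∑ i, ((lam i : ℂ)) • vecMulVec (V *ᵥ u i) (star (V *ᵥ u i)) := by
    rw [hdec, Finset.mul_sum, Finset.sum_mul]
    refine Finset.sum_congr rfl fun i _ => ?_
    rw [mul_smul_comm, smul_mul_assoc, conj_vecMulVec]
  have htr1 : (Q * τ).trace = ∑ i, ((lam i : ℂ)) * qf Q (u i) := by
    rw [hdec, Finset.mul_sum, trace_sum]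
    exact Finset.sum_congr rfl fun i _ => by
      rw [mul_smul_comm, trace_smul, smul_eq_mul, trace_mul_vecMulVec]
  have htr2 : (Q * (V * τ * Vᴴ)).trace = ∑ i, ((lam i : ℂ)) * qf Q (V *ᵥ u i) := by
    rw [hconj, Finset.mul_sum, trace_sum]
    exact Finset.sum_congr rfl fun i _ => by
      rw [mul_smul_comm, trace_smul, smul_eq_mul, trace_mul_vecMulVec]
  have hphase : ∀ x : Fin N → ℂ, qf Q (V *ᵥ x) = qf Q ((φ • V) *ᵥ x) := by
    intro x
    rw [smul_mulVec, qf_unit_smul hφ]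
  have hlamr : ∑ i, lam i = 1 := by
    have : ((∑ i, lam i : ℝ) : ℂ) = 1 := by push_cast; rw [hlamt, hτt]
    exact_mod_cast this
  rw [htr1, htr2, ← Finset.sum_sub_distrib]
  calc ‖∑ i, ((lam i : ℂ) * qf Q (u i) - (lam i : ℂ) * qf Q (V *ᵥ u i))‖
      ≤ ∑ i, ‖(lam i : ℂ) * qf Q (u i) - (lam i : ℂ) * qf Q (V *ᵥ u i)‖ :=
        norm_sum_le _ _
    _ ≤ ∑ i, lam i * frobNorm (1 - φ • V) := by
        refine Finset.sum_le_sum fun i _ => ?_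
        rw [← mul_sub, norm_mul, Complex.norm_real, Real.norm_eq_abs, abs_of_nonneg (hlam0 i)]
        refine mul_le_mul_of_nonneg_left ?_ (hlam0 i)
        rw [hphase (u i)]
        have hb := pure_step hQ hQ' (u i) ((φ • V) *ᵥ u i) (vnorm_eq_one_of (hu1 i))
          ((vnorm_mulVec_unitary hWu (u i)).trans (vnorm_eq_one_of (hu1 i)))
        refine hb.trans ?_
        have : u i - (φ • V) *ᵥ u i = (1 - φ • V) *ᵥ u i := by
          rw [sub_mulVec, one_mulVec]
        rw [this]
        exact vnorm_mulVec_le _ _ (vnorm_eq_one_of (hu1 i))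
    _ = frobNorm (1 - φ • V) := by
        rw [← Finset.sum_mul, hlamr, one_mul]

lemma sum_psd {m : ℕ} (f : Fin m → Matrix (Fin N) (Fin N) ℂ)
    (hf : ∀ j, (f j).PosSemidef) : (∑ j, f j).PosSemidef := by
  classical
  exact Finset.sum_induction f _ (fun A B hA hB => hA.add hB)
    (Matrix.PosSemidef.zero) (fun j _ => hf j)

lemma kraus_psd {Φ} (hΦ : IsKrausChannel (N := N) Φ) {ρ} (hρ : ρ.PosSemidef) :
    (Φ ρ).PosSemidef := by
  obtain ⟨m, K, hK1, hKρ⟩ := hΦ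
  rw [hKρ ρ]
  exact sum_psd _ fun j => hρ.mul_mul_conjTranspose_same (K j)

lemma kraus_trace {Φ} (hΦ : IsKrausChannel (N := N) Φ) (ρ : Matrix (Fin N) (Fin N) ℂ) :
    (Φ ρ).trace = ρ.trace := by
  obtain ⟨m, K, hK1, hKρ⟩ := hΦ
  rw [hKρ ρ, trace_sum]
  calc ∑ j, ((K j) * ρ * (K j)ᴴ).trace = ∑ j, (((K j)ᴴ * K j) * ρ).trace := by
        refine Finset.sum_congr rfl fun j _ => ?_
        rw [trace_mul_cycle, Matrix.mul_assoc]
    _ = ((∑ j, (K j)ᴴ * K j) * ρ).trace := by rw [Finset.sum_mul, trace_sum]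
    _ = ρ.trace := by rw [hK1, one_mul]

lemma kraus_dual {Φ} (hΦ : IsKrausChannel (N := N) Φ) {Q}
    (hQ : Q.PosSemidef ∧ (1 - Q).PosSemidef) :
    ∃ Q', (Q'.PosSemidef ∧ (1 - Q').PosSemidef) ∧
      ∀ ρ, (Q * Φ ρ).trace = (Q' * ρ).trace := by
  obtain ⟨m, K, hK1, hKρ⟩ := hΦ
  refine ⟨∑ j, (K j)ᴴ * Q * K j, ⟨?_, ?_⟩, ?_⟩
  · exact sum_psd _ fun j => hQ.1.conjTranspose_mul_mul_same (K j)
  · have h : (1 : Matrix (Fin N) (Fin N) ℂ) - ∑ j, (K j)ᴴ * Q * K j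
        = ∑ j, (K j)ᴴ * (1 - Q) * K j := by
      have h2 : ∑ j, (K j)ᴴ * (1 - Q) * K j
          = ∑ j, ((K j)ᴴ * K j - (K j)ᴴ * Q * K j) := by
        refine Finset.sum_congr rfl fun j _ => ?_
        rw [mul_sub, mul_one, sub_mul]
      rw [h2, Finset.sum_sub_distrib, hK1]
    rw [h]
    exact sum_psd _ fun j => hQ.2.conjTranspose_mul_mul_same (K j)
  · intro ρ
    rw [hKρ ρ, Finset.mul_sum, trace_sum]
    calc ∑ j, (Q * (K j * ρ * (K j)ᴴ)).trace
        = ∑ j, ((K j)ᴴ * Q * K j * ρ).trace := by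
          refine Finset.sum_congr rfl fun j _ => ?_
          rw [show Q * (K j * ρ * (K j)ᴴ) = (Q * K j * ρ) * (K j)ᴴ by
            simp only [Matrix.mul_assoc]]
          rw [trace_mul_comm]
          simp only [Matrix.mul_assoc]
      _ = ((∑ j, (K j)ᴴ * Q * K j) * ρ).trace := by rw [Finset.sum_mul, trace_sum]

lemma kraus_conj {Φ} (hΦ : IsKrausChannel (N := N) Φ) {U}
    (hU : U ∈ unitaryGroup (Fin N) ℂ) :
    IsKrausChannel (fun ρ => U * Φ ρ * Uᴴ) := by
  obtain ⟨m, K, hK1, hKρ⟩ := hΦ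
  have hUu : Uᴴ * U = 1 := by
    rw [← Matrix.star_eq_conjTranspose]
    exact mem_unitaryGroup_iff'.mp hU
  refine ⟨m, fun j => U * K j, ?_, ?_⟩
  · have h : ∀ j : Fin m, (U * K j)ᴴ * (U * K j) = (K j)ᴴ * K j := by
      intro j
      rw [conjTranspose_mul]
      calc (K j)ᴴ * Uᴴ * (U * K j) = (K j)ᴴ * (Uᴴ * U) * K j := by
            simp only [Matrix.mul_assoc]
        _ = (K j)ᴴ * K j := by rw [hUu, mul_one]
    simp_rw [h]; exact hK1
  · intro ρ
    show U * Φ ρ * Uᴴ = _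
    rw [hKρ ρ, Finset.mul_sum, Finset.sum_mul]
    refine Finset.sum_congr rfl fun j _ => ?_
    rw [conjTranspose_mul]
    simp only [Matrix.mul_assoc]

lemma dual_list (l : List (Matrix (Fin N) (Fin N) ℂ → Matrix (Fin N) (Fin N) ℂ))
    (hl : ∀ Φ ∈ l, IsKrausChannel Φ) {Q : Matrix (Fin N) (Fin N) ℂ}
    (hQ : Q.PosSemidef ∧ (1 - Q).PosSemidef) :
    ∃ Q', (Q'.PosSemidef ∧ (1 - Q').PosSemidef) ∧
      ∀ ρ, (Q * l.foldl (fun ρ Φ => Φ ρ) ρ).trace = (Q' * ρ).trace := by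
  induction l with
  | nil => exact ⟨Q, hQ, fun ρ => rfl⟩
  | cons Φ l ih =>
    obtain ⟨Q', hQ', hQ'tr⟩ := ih (fun Ψ hΨ => hl Ψ (List.mem_cons_of_mem _ hΨ))
    obtain ⟨Q'', hQ'', hQ''tr⟩ := kraus_dual (hl Φ (List.mem_cons_self)) hQ'
    refine ⟨Q'', hQ'', fun ρ => ?_⟩
    have h : (Φ :: l).foldl (fun ρ Φ => Φ ρ) ρ = l.foldl (fun ρ Φ => Φ ρ) (Φ ρ) := rfl
    rw [h, hQ'tr (Φ ρ), hQ''tr ρ]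

lemma tele (l : List ((Matrix (Fin N) (Fin N) ℂ → Matrix (Fin N) (Fin N) ℂ) ×
      Matrix (Fin N) (Fin N) ℂ × ℂ))
    (hl : ∀ p ∈ l, IsKrausChannel p.1 ∧ p.2.1 ∈ unitaryGroup (Fin N) ℂ ∧ ‖p.2.2‖ = 1)
    {Q : Matrix (Fin N) (Fin N) ℂ} (hQ : Q.PosSemidef ∧ (1 - Q).PosSemidef)
    {ρ : Matrix (Fin N) (Fin N) ℂ} (hρ : ρ.PosSemidef) (hρt : ρ.trace = 1) :
    ‖(Q * (l.map Prod.fst).foldl (fun ρ Φ => Φ ρ) ρ).trace -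
        (Q * (l.map (fun p ρ => p.2.1 * p.1 ρ * p.2.1ᴴ)).foldl (fun ρ Φ => Φ ρ) ρ).trace‖
      ≤ (l.map (fun p => frobNorm (1 - p.2.2 • p.2.1))).sum := by
  induction l generalizing ρ with
  | nil => simp
  | cons p l ih =>
    obtain ⟨hpK, hpU, hpφ⟩ := hl p (List.mem_cons_self)
    have hl' := fun q hq => hl q (List.mem_cons_of_mem p hq)
    have hρ'p : (p.1 ρ).PosSemidef := kraus_psd hpK hρ
    have hρ't : (p.1 ρ).trace = 1 := (kraus_trace hpK ρ).trans hρt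
    have hGK : ∀ Ψ ∈ l.map (fun p ρ => p.2.1 * p.1 ρ * p.2.1ᴴ), IsKrausChannel Ψ := by
      intro Ψ hΨ
      obtain ⟨q, hq, rfl⟩ := List.mem_map.mp hΨ
      exact kraus_conj (hl' q hq).1 (hl' q hq).2.1
    obtain ⟨Q', hQ', hQ'tr⟩ := dual_list _ hGK hQ
    set A := (Q * (l.map Prod.fst).foldl (fun ρ Φ => Φ ρ) (p.1 ρ)).trace with hA
    set B := (Q * (l.map (fun p ρ => p.2.1 * p.1 ρ * p.2.1ᴴ)).foldl (fun ρ Φ => Φ ρ)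
      (p.1 ρ)).trace with hB
    set C := (Q * (l.map (fun p ρ => p.2.1 * p.1 ρ * p.2.1ᴴ)).foldl (fun ρ Φ => Φ ρ)
      (p.2.1 * p.1 ρ * p.2.1ᴴ)).trace with hC
    have t1 : ‖A - B‖ ≤ (l.map (fun p => frobNorm (1 - p.2.2 • p.2.1))).sum :=
      ih hl' hρ'p hρ't
    have t2 : ‖B - C‖ ≤ frobNorm (1 - p.2.2 • p.2.1) := by
      rw [hB, hC, hQ'tr, hQ'tr]
      exact key_step hQ'.1 hQ'.2 hρ'p hρ't hpU p.2.2 hpφ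
    have hfold1 : ((p :: l).map Prod.fst).foldl (fun ρ Φ => Φ ρ) ρ
        = (l.map Prod.fst).foldl (fun ρ Φ => Φ ρ) (p.1 ρ) := rfl
    have hfold2 : ((p :: l).map (fun p ρ => p.2.1 * p.1 ρ * p.2.1ᴴ)).foldl (fun ρ Φ => Φ ρ) ρ
        = (l.map (fun p ρ => p.2.1 * p.1 ρ * p.2.1ᴴ)).foldl (fun ρ Φ => Φ ρ)
          (p.2.1 * p.1 ρ * p.2.1ᴴ) := rfl
    rw [hfold1, hfold2, List.map_cons, List.sum_cons]
    calc ‖A - C‖ = ‖(A - B) + (B - C)‖ := by ring_nf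
      _ ≤ ‖A - B‖ + ‖B - C‖ := norm_add_le _ _
      _ ≤ (l.map (fun p => frobNorm (1 - p.2.2 • p.2.1))).sum + frobNorm (1 - p.2.2 • p.2.1) :=
          add_le_add t1 t2
      _ = frobNorm (1 - p.2.2 • p.2.1) + (l.map (fun p => frobNorm (1 - p.2.2 • p.2.1))).sum := by
          ring

lemma vecMulVec_mulVec (z x : Fin N → ℂ) :
    vecMulVec z (star z) *ᵥ x = (star z ⬝ᵥ x) • z := by
  ext p
  simp only [mulVec, vecMulVec_apply, Pi.star_apply, dotProduct, Pi.smul_apply,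
    smul_eq_mul, Finset.sum_mul, Finset.mul_sum]
  exact Finset.sum_congr rfl fun q _ => by ring

lemma psd_rank1_smul (c : ℝ) (hc : 0 ≤ c) (z : Fin N → ℂ) :
    (((c : ℂ)) • vecMulVec z (star z)).PosSemidef := by
  have hdp : ∀ x : Fin N → ℂ, star x ⬝ᵥ z = star (star z ⬝ᵥ x) := by
    intro x
    simp only [dotProduct, Pi.star_apply, star_sum, star_mul', star_star]
    exact Finset.sum_congr rfl fun q _ => by ring
  rw [posSemidef_iff_dotProduct_mulVec]
  constructor
  · show _ = _
    rw [conjTranspose_smul]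
    have h1 : star ((c : ℂ)) = ((c : ℂ)) := by
      rw [Complex.star_def, Complex.conj_ofReal]
    have h2 : (vecMulVec z (star z))ᴴ = vecMulVec z (star z) := by
      ext p q
      simp only [conjTranspose_apply, vecMulVec_apply, Pi.star_apply, star_mul', star_star]
      ring
    rw [h1, h2]
  · intro x
    have expand : star x ⬝ᵥ ((((c : ℂ)) • vecMulVec z (star z)) *ᵥ x)
        = ((c * ‖star z ⬝ᵥ x‖ ^ 2 : ℝ) : ℂ) := by
      rw [smul_mulVec, dotProduct_smul, vecMulVec_mulVec, dotProduct_smul,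
        smul_eq_mul, smul_eq_mul, hdp x, RCLike.star_def, RCLike.mul_conj]
      simp only [RCLike.ofReal, Complex.coe_algebraMap]
      push_cast
      ring
    rw [expand]
    exact_mod_cast mul_nonneg hc (sq_nonneg _)

lemma psd_sum_rank1 {m : ℕ} (c : Fin m → ℝ) (hc : ∀ i, 0 ≤ c i)
    (z : Fin m → Fin N → ℂ) :
    (∑ i, ((c i : ℂ)) • vecMulVec (z i) (star (z i))).PosSemidef :=
  sum_psd _ fun i => psd_rank1_smul (c i) (hc i) (z i)

lemma trace_vecMulVec (z : Fin N → ℂ) :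
    (vecMulVec z (star z)).trace = ((∑ p, ‖z p‖ ^ 2 : ℝ) : ℂ) := by
  simp only [trace, diag_apply, vecMulVec_apply, Pi.star_apply, RCLike.star_def,
    RCLike.mul_conj, RCLike.ofReal, Complex.coe_algebraMap]
  push_cast
  rfl

lemma trace_sum_rank1 {m : ℕ} (c : Fin m → ℂ) (z : Fin m → Fin N → ℂ) :
    (∑ i, c i • vecMulVec (z i) (star (z i))).trace
      = ∑ i, c i * ((∑ p, ‖z i p‖ ^ 2 : ℝ) : ℂ) := by
  rw [trace_sum]
  exact Finset.sum_congr rfl fun i _ => by rw [trace_smul, smul_eq_mul, trace_vecMulVec]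

lemma trace_mul_sum_rank1 {m : ℕ} (Q : Matrix (Fin N) (Fin N) ℂ) (c : Fin m → ℂ)
    (z : Fin m → Fin N → ℂ) :
    (Q * ∑ i, c i • vecMulVec (z i) (star (z i))).trace = ∑ i, c i * qf Q (z i) := by
  rw [Finset.mul_sum, trace_sum]
  exact Finset.sum_congr rfl fun i _ => by
    rw [mul_smul_comm, trace_smul, smul_eq_mul, trace_mul_vecMulVec]

lemma conj_sum_rank1 {m : ℕ} (V : Matrix (Fin N) (Fin N) ℂ) (c : Fin m → ℂ)
    (z : Fin m → Fin N → ℂ) :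
    V * (∑ i, c i • vecMulVec (z i) (star (z i))) * Vᴴ
      = ∑ i, c i • vecMulVec (V *ᵥ z i) (star (V *ᵥ z i)) := by
  rw [Finset.mul_sum, Finset.sum_mul]
  refine Finset.sum_congr rfl fun i _ => ?_
  rw [mul_smul_comm, smul_mul_assoc, conj_vecMulVec]

lemma emb_decomp_general {m k l : ℕ} (e : Fin m × Fin k ≃ Fin l) (a : Fin k → ℂ)
    (c : Fin m → ℂ) (w : Fin m → Fin m → ℂ) :
    (reindex e e) ((∑ i, c i • vecMulVec (w i) (star (w i))) ⊗ₖ vecMulVec a (star a))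
      = ∑ i, c i • vecMulVec (fun p => w i (e.symm p).1 * a (e.symm p).2)
          (star fun p => w i (e.symm p).1 * a (e.symm p).2) := by
  ext p q
  simp only [reindex_apply, submatrix_apply, kroneckerMap_apply, Matrix.sum_apply,
    Matrix.smul_apply, vecMulVec_apply, Pi.star_apply, smul_eq_mul, Finset.sum_mul,
    star_mul']
  exact Finset.sum_congr rfl fun i _ => by ring

lemma sum_norm_prod {m k l : ℕ} (e : Fin m × Fin k ≃ Fin l) (a : Fin k → ℂ)
    (x : Fin m → ℂ) :
    ∑ p, ‖x (e.symm p).1 * a (e.symm p).2‖ ^ 2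
      = (∑ i, ‖x i‖ ^ 2) * (∑ j, ‖a j‖ ^ 2) := by
  calc ∑ p, ‖x (e.symm p).1 * a (e.symm p).2‖ ^ 2
      = ∑ pr : Fin m × Fin k, ‖x pr.1 * a pr.2‖ ^ 2 :=
        Equiv.sum_comp e.symm (fun pr : Fin m × Fin k => ‖x pr.1 * a pr.2‖ ^ 2)
    _ = ∑ i, ∑ j, ‖x i * a j‖ ^ 2 := Fintype.sum_prod_type _
    _ = (∑ i, ‖x i‖ ^ 2) * (∑ j, ‖a j‖ ^ 2) := by
        rw [Finset.sum_mul_sum]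
        exact Finset.sum_congr rfl fun i _ => Finset.sum_congr rfl fun j _ => by
          rw [norm_mul, mul_pow]

lemma sum_sq_of_vnorm_one {k : ℕ} {x : Fin k → ℂ} (h : vnorm x = 1) :
    ∑ j, ‖x j‖ ^ 2 = 1 := by
  have := sq_vnorm x
  rw [h] at this
  simpa using this.symm

lemma sum_inf_peel {S : Type*} [Nonempty S] {n : ℕ} (h : Fin n → S → ℝ)
    (h0 : ∀ i s, 0 ≤ h i s) (x : ℝ) (H : ∀ φ : Fin n → S, x ≤ ∑ i, h i (φ i)) :
    x ≤ ∑ i, ⨅ s, h i s := by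
  induction n generalizing x with
  | zero => simpa using H (fun i => i.elim0)
  | succ k ih =>
    rw [Fin.sum_univ_succ]
    have step : ∀ s0 : S, x - h 0 s0 ≤ ∑ i : Fin k, ⨅ s, h i.succ s := by
      intro s0
      refine ih (fun i s => h i.succ s) (fun i s => h0 _ _) _ (fun φ => ?_)
      have hh := H (Fin.cons s0 φ)
      rw [Fin.sum_univ_succ] at hh
      simp only [Fin.cons_zero, Fin.cons_succ] at hh
      linarith
    have h2 : x - ∑ i : Fin k, ⨅ s, h i.succ s ≤ ⨅ s, h 0 s :=
      le_ciInf fun s0 => by linarith [step s0]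
    linarith

end Cor1

open Cor1

/-- Corollary 1: the shift in predictive confidence caused by inserting adversarial
unitary gates within the intermediate layers of a quantum classifier is bounded by
the sum of the phase-optimized Frobenius-norm distances of the gates to the identity. -/
theorem confidence_shift_frobNorm_bound (d da n : ℕ)
    (E : Fin n → Matrix (Fin (2 ^ (d + da))) (Fin (2 ^ (d + da))) ℂ →
      Matrix (Fin (2 ^ (d + da))) (Fin (2 ^ (d + da))) ℂ)
    (hE : ∀ i, IsKrausChannel (E i))
    (U0 : Matrix (Fin (2 ^ d)) (Fin (2 ^ d)) ℂ)
    (hU0 : U0 ∈ Matrix.unitaryGroup (Fin (2 ^ d)) ℂ)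
    (U : Fin n → Matrix (Fin (2 ^ (d + da))) (Fin (2 ^ (d + da))) ℂ)
    (hU : ∀ i, U i ∈ Matrix.unitaryGroup (Fin (2 ^ (d + da))) ℂ)
    (σ : Matrix (Fin (2 ^ d)) (Fin (2 ^ d)) ℂ)
    (hσ : σ.PosSemidef ∧ σ.trace = 1)
    (a : Fin (2 ^ da) → ℂ) (ha : ∑ i, ‖a i‖ ^ 2 = 1)
    (Pk : Matrix (Fin (2 ^ (d + da))) (Fin (2 ^ (d + da))) ℂ)
    (hPk : Pk.PosSemidef ∧ (1 - Pk).PosSemidef)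
    -- the Kronecker-product embedding `ρ ⊗ aaᴴ`, reindexed to live on `Fin (2 ^ (d + da))`
    (emb : Matrix (Fin (2 ^ d)) (Fin (2 ^ d)) ℂ →
      Matrix (Fin (2 ^ (d + da))) (Fin (2 ^ (d + da))) ℂ)
    (hemb : ∀ ρ, emb ρ =
      Matrix.reindex (finProdFinEquiv.trans (finCongr (pow_add 2 d da).symm))
        (finProdFinEquiv.trans (finCongr (pow_add 2 d da).symm))
        (ρ ⊗ₖ Matrix.vecMulVec a (star a)))
    -- y : predictive confidence of the unattacked classifier
    (y : ℂ) (hy : y = Matrix.trace (Pk *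
      (List.ofFn E).foldl (fun ρ Φ => Φ ρ) (emb σ)))
    -- ŷ : predictive confidence of the attacked classifier
    (yhat : ℂ) (hyhat : yhat = Matrix.trace (Pk *
      (List.ofFn (fun i => fun ρ => U i * E i ρ * (U i)ᴴ)).foldl (fun ρ Φ => Φ ρ)
        (emb (U0 * σ * U0ᴴ)))) :
    ‖y - yhat‖ ≤
      (⨅ φ : {z : ℂ // ‖z‖ = 1}, frobNorm (1 - (φ : ℂ) • U0)) +
        ∑ i, ⨅ φ : {z : ℂ // ‖z‖ = 1}, frobNorm (1 - (φ : ℂ) • U i) := by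
  classical
  obtain ⟨hσp, hσt⟩ := hσ
  obtain ⟨lam, w, hlam0, hlamt, hw1, hdec⟩ := psd_decomp hσp
  set e : Fin (2 ^ d) × Fin (2 ^ da) ≃ Fin (2 ^ (d + da)) :=
    finProdFinEquiv.trans (finCongr (pow_add 2 d da).symm) with he
  -- the embedded rank-one vectors
  have hx : ∀ x : Fin (2 ^ d) → ℂ,
      ∑ p, ‖x (e.symm p).1 * a (e.symm p).2‖ ^ 2 = ∑ j, ‖x j‖ ^ 2 := by
    intro x
    rw [sum_norm_prod e a x, ha, mul_one]
  have hembσ : emb σ = ∑ i, ((lam i : ℂ)) •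
      vecMulVec (fun p => w i (e.symm p).1 * a (e.symm p).2)
        (star fun p => w i (e.symm p).1 * a (e.symm p).2) := by
    rw [hemb σ]
    conv_lhs => rw [hdec]
    exact emb_decomp_general e a _ w
  have hdec2 : U0 * σ * U0ᴴ = ∑ i, ((lam i : ℂ)) •
      vecMulVec (U0 *ᵥ w i) (star (U0 *ᵥ w i)) := by
    conv_lhs => rw [hdec]
    exact conj_sum_rank1 U0 _ w
  have hembσ' : emb (U0 * σ * U0ᴴ) = ∑ i, ((lam i : ℂ)) •
      vecMulVec (fun p => (U0 *ᵥ w i) (e.symm p).1 * a (e.symm p).2)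
        (star fun p => (U0 *ᵥ w i) (e.symm p).1 * a (e.symm p).2) := by
    rw [hemb _]
    conv_lhs => rw [hdec2]
    exact emb_decomp_general e a _ _
  have hρ1p : (emb σ).PosSemidef := by
    rw [hembσ]; exact psd_sum_rank1 lam hlam0 _
  have hρ1t : (emb σ).trace = 1 := by
    rw [hembσ, trace_sum_rank1]
    calc (∑ i, (lam i : ℂ) *
          ((∑ p, ‖w i (e.symm p).1 * a (e.symm p).2‖ ^ 2 : ℝ) : ℂ))
        = ∑ i, (lam i : ℂ) := by
          refine Finset.sum_congr rfl fun i _ => ?_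
          rw [hx (w i), hw1 i]
          norm_num
      _ = 1 := hlamt.trans hσt
  have hU0u : star U0 * U0 = 1 := mem_unitaryGroup_iff'.mp hU0
  have hlamr : ∑ i, lam i = 1 := by
    have h : ((∑ i, lam i : ℝ) : ℂ) = 1 := by push_cast; rw [hlamt, hσt]
    exact_mod_cast h
  haveI : Nonempty {z : ℂ // ‖z‖ = 1} := ⟨⟨1, by norm_num⟩⟩
  -- the fixed-phase bound
  have main : ∀ (φ0 : {z : ℂ // ‖z‖ = 1}) (φ : Fin n → {z : ℂ // ‖z‖ = 1}),
      ‖y - yhat‖ ≤ frobNorm (1 - (φ0 : ℂ) • U0) +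
        ∑ i, frobNorm (1 - (φ i : ℂ) • U i) := by
    intro φ0 φ
    set l := List.ofFn (fun i => (E i, U i, ((φ i : ℂ)))) with hldef
    have hlmem : ∀ p ∈ l, IsKrausChannel p.1 ∧
        p.2.1 ∈ unitaryGroup (Fin (2 ^ (d + da))) ℂ ∧ ‖p.2.2‖ = 1 := by
      intro p hp
      rw [hldef, List.mem_ofFn] at hp
      obtain ⟨i, rfl⟩ := hp
      exact ⟨hE i, hU i, (φ i).2⟩
    have hmap1 : l.map Prod.fst = List.ofFn E := by
      rw [hldef, List.map_ofFn]; rfl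
    have hmap2 : l.map (fun p ρ => p.2.1 * p.1 ρ * p.2.1ᴴ)
        = List.ofFn (fun i => fun ρ => U i * E i ρ * (U i)ᴴ) := by
      rw [hldef, List.map_ofFn]; rfl
    have hsum : (l.map (fun p => frobNorm (1 - p.2.2 • p.2.1))).sum
        = ∑ i, frobNorm (1 - (φ i : ℂ) • U i) := by
      rw [hldef, List.map_ofFn, List.sum_ofFn]
      exact Finset.sum_congr rfl fun i _ => rfl
    set M : ℂ := (Pk * (List.ofFn (fun i => fun ρ => U i * E i ρ * (U i)ᴴ)).foldl
      (fun ρ Φ => Φ ρ) (emb σ)).trace with hM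
    have t1 : ‖y - M‖ ≤ ∑ i, frobNorm (1 - (φ i : ℂ) • U i) := by
      have h := tele l hlmem hPk hρ1p hρ1t
      rw [hmap1, hmap2, hsum] at h
      rw [hy, hM]
      exact h
    have hGK : ∀ Ψ ∈ List.ofFn (fun i => fun ρ => U i * E i ρ * (U i)ᴴ),
        IsKrausChannel Ψ := by
      intro Ψ hΨ
      rw [List.mem_ofFn] at hΨ
      obtain ⟨i, rfl⟩ := hΨ
      exact kraus_conj (hE i) (hU i)
    obtain ⟨Q', hQ', hQ'tr⟩ := dual_list _ hGK hPk
    have t2 : ‖M - yhat‖ ≤ frobNorm (1 - (φ0 : ℂ) • U0) := by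
      rw [hM, hyhat, hQ'tr, hQ'tr, hembσ, hembσ', trace_mul_sum_rank1, trace_mul_sum_rank1,
        ← Finset.sum_sub_distrib]
      have hterm : ∀ i : Fin (2 ^ d),
          ‖qf Q' (fun p => w i (e.symm p).1 * a (e.symm p).2) -
            qf Q' (fun p => (U0 *ᵥ w i) (e.symm p).1 * a (e.symm p).2)‖
          ≤ frobNorm (1 - (φ0 : ℂ) • U0) := by
        intro i
        have hb1 : qf Q' (fun p => (U0 *ᵥ w i) (e.symm p).1 * a (e.symm p).2)
            = qf Q' ((φ0 : ℂ) • fun p => (U0 *ᵥ w i) (e.symm p).1 * a (e.symm p).2) :=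
          (qf_unit_smul φ0.2 _).symm
        have hsm : ((φ0 : ℂ) • fun p => (U0 *ᵥ w i) (e.symm p).1 * a (e.symm p).2)
            = (fun p => (((φ0 : ℂ) • U0) *ᵥ w i) (e.symm p).1 * a (e.symm p).2) := by
          funext p
          simp only [Pi.smul_apply, smul_eq_mul, smul_mulVec]
          ring
        have hdiff : ((fun p => w i (e.symm p).1 * a (e.symm p).2) -
            fun p => (((φ0 : ℂ) • U0) *ᵥ w i) (e.symm p).1 * a (e.symm p).2)
            = (fun p => (((1 : Matrix (Fin (2 ^ d)) (Fin (2 ^ d)) ℂ) - (φ0 : ℂ) • U0)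
                *ᵥ w i) (e.symm p).1 * a (e.symm p).2) := by
          funext p
          simp only [Pi.sub_apply, sub_mulVec, one_mulVec]
          ring
        have hwn : vnorm (w i) = 1 := vnorm_eq_one_of (hw1 i)
        have hvz : vnorm (fun p => w i (e.symm p).1 * a (e.symm p).2) = 1 :=
          vnorm_eq_one_of ((hx (w i)).trans (hw1 i))
        have hvz' : vnorm (fun p => (((φ0 : ℂ) • U0) *ᵥ w i) (e.symm p).1
            * a (e.symm p).2) = 1 := by
          refine vnorm_eq_one_of ?_
          rw [hx]
          refine sum_sq_of_vnorm_one ?_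
          rw [vnorm_mulVec_unitary (unit_smul_unitary hU0 φ0.2), hwn]
        have hb := pure_step hQ'.1 hQ'.2
          (fun p => w i (e.symm p).1 * a (e.symm p).2)
          (fun p => (((φ0 : ℂ) • U0) *ᵥ w i) (e.symm p).1 * a (e.symm p).2)
          hvz hvz'
        rw [hb1, hsm]
        refine hb.trans ?_
        rw [hdiff]
        have hveq : vnorm (fun p => (((1 : Matrix (Fin (2 ^ d)) (Fin (2 ^ d)) ℂ)
            - (φ0 : ℂ) • U0) *ᵥ w i) (e.symm p).1 * a (e.symm p).2)
            = vnorm (((1 : Matrix (Fin (2 ^ d)) (Fin (2 ^ d)) ℂ) - (φ0 : ℂ) • U0)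
              *ᵥ w i) := by
          unfold vnorm
          rw [hx]
        rw [hveq]
        exact vnorm_mulVec_le _ _ hwn
      calc ‖∑ i, ((lam i : ℂ) *
              qf Q' (fun p => w i (e.symm p).1 * a (e.symm p).2) -
            (lam i : ℂ) * qf Q' (fun p => (U0 *ᵥ w i) (e.symm p).1 * a (e.symm p).2))‖
          ≤ ∑ i, ‖(lam i : ℂ) *
              qf Q' (fun p => w i (e.symm p).1 * a (e.symm p).2) -
            (lam i : ℂ) * qf Q' (fun p => (U0 *ᵥ w i) (e.symm p).1 * a (e.symm p).2)‖ :=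
            norm_sum_le _ _
        _ ≤ ∑ i, lam i * frobNorm (1 - (φ0 : ℂ) • U0) := by
            refine Finset.sum_le_sum fun i _ => ?_
            rw [← mul_sub, norm_mul, Complex.norm_real, Real.norm_eq_abs,
              abs_of_nonneg (hlam0 i)]
            exact mul_le_mul_of_nonneg_left (hterm i) (hlam0 i)
        _ = frobNorm (1 - (φ0 : ℂ) • U0) := by
            rw [← Finset.sum_mul, hlamr, one_mul]
    calc ‖y - yhat‖ = ‖(y - M) + (M - yhat)‖ := by ring_nf
      _ ≤ ‖y - M‖ + ‖M - yhat‖ := norm_add_le _ _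
      _ ≤ (∑ i, frobNorm (1 - (φ i : ℂ) • U i)) + frobNorm (1 - (φ0 : ℂ) • U0) :=
          add_le_add t1 t2
      _ = frobNorm (1 - (φ0 : ℂ) • U0) + ∑ i, frobNorm (1 - (φ i : ℂ) • U i) := by ring
  -- peel off the infima
  have step1 : ∀ φ0 : {z : ℂ // ‖z‖ = 1},
      ‖y - yhat‖ - frobNorm (1 - (φ0 : ℂ) • U0)
        ≤ ∑ i, ⨅ φ : {z : ℂ // ‖z‖ = 1}, frobNorm (1 - (φ : ℂ) • U i) := by
    intro φ0
    exact sum_inf_peel (S := {z : ℂ // ‖z‖ = 1}) (fun i s => frobNorm (1 - (s : ℂ) • U i))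
      (fun i s => Real.sqrt_nonneg _) _ (fun φ => by linarith [main φ0 φ])
  have step2 : ‖y - yhat‖ -
      ∑ i, ⨅ φ : {z : ℂ // ‖z‖ = 1}, frobNorm (1 - (φ : ℂ) • U i)
      ≤ ⨅ φ : {z : ℂ // ‖z‖ = 1}, frobNorm (1 - (φ : ℂ) • U0) :=
    le_ciInf fun φ0 => by linarith [step1 φ0]
  linarith
end

section
/- Let d, d_a be natural numbers, d₊ = d + d_a, and N = 2^{d₊}. Let E₁, …, E_n be Kraus-form quantum channels on N×N complex matrices, let Û₀ be a 2^d×2^d unitary matrix, and let Û₁, …, Û_n be N×N unitary matrices. Let σ be a 2^d×2^d density matrix and a ∈ ℂ^{2^{d_a}} a unit vector. Then ‖(E_n ∘ ⋯ ∘ E₁)(σ ⊗ aaᴴ) − (Ad_{Û_n} ∘ E_n ∘ ⋯ ∘ Ad_{Û₁} ∘ E₁)((Û₀ σ Û₀ᴴ) ⊗ aaᴴ)‖₁ ≤ 2 ( inf_{φ₀ ∈ ℂ, |φ₀| = 1} ‖I_{2^d} − φ₀ Û₀‖_op + Σ_{i=1}^n inf_{φ_i ∈ ℂ, |φ_i|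 = 1} ‖I_N − φ_i Û_i‖_op ), where Ad_U(ρ) = U ρ Uᴴ and ⊗ is the Kronecker product. -/
open Matrix

section compat
open scoped ComplexOrder MatrixOrder

noncomputable def Matrix.PosSemidef.sqrt {n : ℕ} {A : Matrix (Fin n) (Fin n) ℂ}
    (hA : A.PosSemidef) : Matrix (Fin n) (Fin n) ℂ :=
  (hA.1.eigenvectorUnitary : Matrix (Fin n) (Fin n) ℂ) *
    Matrix.diagonal (((↑) : ℝ → ℂ) ∘ (√·) ∘ hA.1.eigenvalues) *
    (star hA.1.eigenvectorUnitary : Matrix (Fin n) (Fin n) ℂ)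

lemma Matrix.IsHermitian.spectral_theorem_old {n : ℕ} {A : Matrix (Fin n) (Fin n) ℂ}
    (hA : A.IsHermitian) :
    A = (hA.eigenvectorUnitary : Matrix (Fin n) (Fin n) ℂ) * diagonal ((↑) ∘ hA.eigenvalues) *
      star (hA.eigenvectorUnitary : Matrix (Fin n) (Fin n) ℂ) := by
  conv_lhs => rw [hA.spectral_theorem]
  rfl

lemma Matrix.IsHermitian.star_mul_self_mul_eq_diagonal {n : ℕ} {A : Matrix (Fin n) (Fin n) ℂ}
    (hA : A.IsHermitian) :
    star (hA.eigenvectorUnitary : Matrix (Fin n) (Fin n) ℂ) * A *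
      (hA.eigenvectorUnitary : Matrix (Fin n) (Fin n) ℂ) = diagonal ((↑) ∘ hA.eigenvalues) := by
  have h := hA.spectral_theorem_old
  have hV1 : star (hA.eigenvectorUnitary : Matrix (Fin n) (Fin n) ℂ) *
      (hA.eigenvectorUnitary : Matrix (Fin n) (Fin n) ℂ) = 1 := Unitary.coe_star_mul_self _
  calc _ = star (hA.eigenvectorUnitary : Matrix (Fin n) (Fin n) ℂ) *
        ((hA.eigenvectorUnitary : Matrix (Fin n) (Fin n) ℂ) * diagonal ((↑) ∘ hA.eigenvalues) *
        star (hA.eigenvectorUnitary : Matrix (Fin n) (Fin n) ℂ)) *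
        (hA.eigenvectorUnitary : Matrix (Fin n) (Fin n) ℂ) := by rw [← h]
    _ = (star (hA.eigenvectorUnitary : Matrix (Fin n) (Fin n) ℂ) *
        (hA.eigenvectorUnitary : Matrix (Fin n) (Fin n) ℂ)) * diagonal ((↑) ∘ hA.eigenvalues) *
        (star (hA.eigenvectorUnitary : Matrix (Fin n) (Fin n) ℂ) *
        (hA.eigenvectorUnitary : Matrix (Fin n) (Fin n) ℂ)) := by simp only [mul_assoc]
    _ = _ := by rw [hV1, one_mul, mul_one]

lemma Matrix.PosSemidef.posSemidef_sqrt {n : ℕ} {A : Matrix (Fin n) (Fin n) ℂ}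
    (hA : A.PosSemidef) : hA.sqrt.PosSemidef := by
  have hd : (Matrix.diagonal (((↑) : ℝ → ℂ) ∘ (√·) ∘ hA.1.eigenvalues)).PosSemidef := by
    refine Matrix.PosSemidef.diagonal ?_
    intro i
    simpa using Complex.zero_le_real.mpr (Real.sqrt_nonneg (hA.1.eigenvalues i))
  exact hd.mul_mul_conjTranspose_same (hA.1.eigenvectorUnitary : Matrix (Fin n) (Fin n) ℂ)

lemma Matrix.PosSemidef.sqrt_mul_self {n : ℕ} {A : Matrix (Fin n) (Fin n) ℂ}
    (hA : A.PosSemidef) : hA.sqrt * hA.sqrt = A := by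
  set V : Matrix (Fin n) (Fin n) ℂ := (hA.1.eigenvectorUnitary : Matrix (Fin n) (Fin n) ℂ)
  have hV1 : star V * V = 1 := Unitary.coe_star_mul_self _
  have e : hA.sqrt = V * diagonal (((↑) : ℝ → ℂ) ∘ (√·) ∘ hA.1.eigenvalues) * star V := rfl
  rw [e]
  calc _ = V * (diagonal (((↑) : ℝ → ℂ) ∘ (√·) ∘ hA.1.eigenvalues) * ((star V * V) *
        diagonal (((↑) : ℝ → ℂ) ∘ (√·) ∘ hA.1.eigenvalues))) * star V := by
        simp only [mul_assoc]
    _ = V * diagonal ((↑) ∘ hA.1.eigenvalues) * star V := by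
        rw [hV1, one_mul, diagonal_mul_diagonal]
        refine congrArg (fun d => V * diagonal d * star V) (funext fun i => ?_)
        simp only [Function.comp_apply]
        rw [← Complex.ofReal_mul, Real.mul_self_sqrt (hA.eigenvalues_nonneg i)]
    _ = A := hA.1.spectral_theorem_old.symm

lemma Matrix.PosSemidef.eq_sqrt_of_sq_eq {n : ℕ} {A B : Matrix (Fin n) (Fin n) ℂ}
    (hB : B.PosSemidef) (hA : A.PosSemidef) (h : B ^ 2 = A) : B = hA.sqrt := by
  have h1 : CFC.sqrt A = B := CFC.sqrt_unique (by rw [← h, pow_two]) hB.nonneg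
  have h2 : CFC.sqrt A = hA.sqrt := CFC.sqrt_unique hA.sqrt_mul_self hA.posSemidef_sqrt.nonneg
  rw [← h1, h2]

end compat
open scoped Kronecker ComplexOrder Matrix.Norms.L2Operator

set_option maxHeartbeats 1000000
set_option linter.unnecessarySimpa false

/-- The ℓ²-operator norm (largest singular value) of a complex square matrix. -/
noncomputable def opNorm {n : ℕ} (A : Matrix (Fin n) (Fin n) ℂ) : ℝ :=
  ‖Matrix.toEuclideanCLM (𝕜 := ℂ) A‖

/-- The trace norm `‖A‖₁ = Tr √(AᴴA)` of a complex square matrix. -/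
noncomputable def traceNorm {n : ℕ} (A : Matrix (Fin n) (Fin n) ℂ) : ℝ :=
  (((Matrix.posSemidef_conjTranspose_mul_self A).1.eigenvectorUnitary : Matrix (Fin n) (Fin n) ℂ) *
    Matrix.diagonal (((↑) : ℝ → ℂ) ∘ (√·) ∘ (Matrix.posSemidef_conjTranspose_mul_self A).1.eigenvalues) *
    (star (Matrix.posSemidef_conjTranspose_mul_self A).1.eigenvectorUnitary :
      Matrix (Fin n) (Fin n) ℂ)).trace.re

lemma traceNorm_sqrt {n : ℕ} (A : Matrix (Fin n) (Fin n) ℂ) :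
    traceNorm A = ((Matrix.posSemidef_conjTranspose_mul_self A).sqrt.trace).re := rfl

lemma traceNorm_eq_sum {n : ℕ} (A : Matrix (Fin n) (Fin n) ℂ) :
    traceNorm A = ∑ i, Real.sqrt ((Matrix.posSemidef_conjTranspose_mul_self A).1.eigenvalues i) := by
  set hH := (Matrix.posSemidef_conjTranspose_mul_self A).1 with hHdef
  have hs : (Matrix.posSemidef_conjTranspose_mul_self A).sqrt =
      (hH.eigenvectorUnitary : Matrix (Fin n) (Fin n) ℂ) *
        diagonal ((↑) ∘ Real.sqrt ∘ hH.eigenvalues) *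
        (star (hH.eigenvectorUnitary : Matrix (Fin n) (Fin n) ℂ)) := rfl
  have hV1 : (star (hH.eigenvectorUnitary : Matrix (Fin n) (Fin n) ℂ)) *
      (hH.eigenvectorUnitary : Matrix (Fin n) (Fin n) ℂ) = 1 := Unitary.coe_star_mul_self _
  rw [traceNorm_sqrt, hs, trace_mul_comm, ← mul_assoc, hV1, one_mul, trace_diagonal]
  simp

lemma norm_trace_mul_le {n : ℕ} (A W : Matrix (Fin n) (Fin n) ℂ) (hW : ‖W‖ ≤ 1) :
    ‖trace (W * A)‖ ≤ traceNorm A := by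
  classical
  set hH := (Matrix.posSemidef_conjTranspose_mul_self A).1 with hHdef
  set V : Matrix (Fin n) (Fin n) ℂ := (hH.eigenvectorUnitary : Matrix (Fin n) (Fin n) ℂ) with hVdef
  have hV1 : star V * V = 1 := Unitary.coe_star_mul_self _
  have hV2 : V * star V = 1 := Unitary.coe_mul_star_self _
  have hdiag : star V * (Aᴴ * A) * V = diagonal ((↑) ∘ hH.eigenvalues) :=
    hH.star_mul_self_mul_eq_diagonal
  have htr : trace (W * A) = trace (star V * (W * A) * V) := by
    rw [trace_mul_cycle, ← mul_assoc, hV2, one_mul]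
  set y : Fin n → EuclideanSpace ℂ (Fin n) :=
    fun i => (WithLp.equiv 2 _).symm (fun k => (A * V) k i) with hydef
  set x : Fin n → EuclideanSpace ℂ (Fin n) :=
    fun i => (WithLp.equiv 2 _).symm (fun k => star ((star V * W) i k)) with hxdef
  have hentry : ∀ i, ((star V * (W * A) * V) i i) = inner ℂ (x i) (y i) := by
    intro i
    have h : star V * (W * A) * V = (star V * W) * (A * V) := by
      simp only [mul_assoc]
    rw [h, mul_apply]
    simp [hxdef, hydef, PiLp.inner_apply, RCLike.inner_apply, WithLp.equiv_symm_apply, PiLp.toLp_apply]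
    exact Finset.sum_congr rfl fun j _ => mul_comm _ _
  have hynorm : ∀ i, ‖y i‖ = Real.sqrt (hH.eigenvalues i) := by
    intro i
    have h1 : (inner ℂ (y i) (y i) : ℂ) = ((hH.eigenvalues i : ℝ) : ℂ) := by
      rw [PiLp.inner_apply]
      have h0 : ∀ k, (inner ℂ ((y i) k) ((y i) k) : ℂ) = star ((A * V) k i) * ((A * V) k i) := by
        intro k
        simp [hydef, RCLike.inner_apply, WithLp.equiv_symm_apply, PiLp.toLp_apply, Complex.conj_mul']
      rw [Finset.sum_congr rfl fun k _ => h0 k]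
      have h2 : ((star (A * V)) * (A * V)) i i = ((hH.eigenvalues i : ℝ) : ℂ) := by
        have h5 : (star (A * V)) * (A * V) = star V * (Aᴴ * A) * V := by
          rw [Matrix.star_mul]
          simp only [Matrix.star_eq_conjTranspose, mul_assoc]
        rw [h5, hdiag, diagonal_apply_eq]
        rfl
      rw [← h2, mul_apply]
      exact Finset.sum_congr rfl fun k _ => by rw [Matrix.star_apply]
    rw [@norm_eq_sqrt_re_inner ℂ, h1]
    simp
  have hxnorm : ∀ i, ‖x i‖ ≤ 1 := by
    intro i
    set vE : EuclideanSpace ℂ (Fin n) := (WithLp.equiv 2 _).symm (fun j => V j i) with hvdef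
    have hfun : (fun k => star ((star V * W) i k)) = Wᴴ *ᵥ (fun j => V j i) := by
      funext k
      simp [Matrix.mul_apply, Matrix.mulVec, dotProduct, conjTranspose_apply,
        star_sum, star_mul', Matrix.star_eq_conjTranspose]
      congr 1
      funext j
      ring
    have hx : x i = (EuclideanSpace.equiv (Fin n) ℂ).symm (Wᴴ *ᵥ vE) := by
      rw [hxdef]
      simp only [hfun]
      rfl
    have hvnorm : ‖vE‖ = 1 := by
      have h1 : (inner ℂ vE vE : ℂ) = 1 := by
        rw [PiLp.inner_apply]
        have h0 : ∀ k, (inner ℂ (vE k) (vE k) : ℂ) = star (V k i) * (V k i) := by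
          intro k
          simp [hvdef, RCLike.inner_apply, WithLp.equiv_symm_apply, PiLp.toLp_apply, Complex.conj_mul']
        rw [Finset.sum_congr rfl fun k _ => h0 k]
        have h2 : ((star V) * V) i i = 1 := by rw [hV1, one_apply_eq]
        rw [← h2, mul_apply]
        exact Finset.sum_congr rfl fun k _ => by rw [Matrix.star_apply]
      rw [@norm_eq_sqrt_re_inner ℂ, h1]
      simp
    calc ‖x i‖ ≤ ‖Wᴴ‖ * ‖vE‖ := by rw [hx]; exact Matrix.l2_opNorm_mulVec Wᴴ vE
    _ ≤ 1 := by rw [Matrix.l2_opNorm_conjTranspose, hvnorm, mul_one]; exact hW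
  have hsum : trace (star V * (W * A) * V) = ∑ i, inner ℂ (x i) (y i) := by
    rw [Matrix.trace]
    exact Finset.sum_congr rfl fun i _ => hentry i
  rw [htr, hsum, traceNorm_eq_sum]
  calc ‖∑ i, (inner ℂ (x i) (y i) : ℂ)‖ ≤ ∑ i, ‖(inner ℂ (x i) (y i) : ℂ)‖ := norm_sum_le _ _
  _ ≤ ∑ i, Real.sqrt (hH.eigenvalues i) := by
      refine Finset.sum_le_sum fun i _ => ?_
      calc ‖(inner ℂ (x i) (y i) : ℂ)‖ ≤ ‖x i‖ * ‖y i‖ := norm_inner_le_norm _ _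
      _ ≤ 1 * Real.sqrt (hH.eigenvalues i) := by
          rw [hynorm i]
          exact mul_le_mul_of_nonneg_right (hxnorm i) (Real.sqrt_nonneg _)
      _ = _ := one_mul _

private lemma diagonal_congr {n : ℕ} {f g : Fin n → ℂ} (h : ∀ i, f i = g i) :
    Matrix.diagonal f = Matrix.diagonal g := by
  have : f = g := funext h
  rw [this]

lemma exists_achiever {n : ℕ} (A : Matrix (Fin n) (Fin n) ℂ) :
    ∃ M : Matrix (Fin n) (Fin n) ℂ, ‖M‖ ≤ 1 ∧
      M * A = (Matrix.posSemidef_conjTranspose_mul_self A).sqrt := by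
  classical
  set hA := Matrix.posSemidef_conjTranspose_mul_self A with hAdef
  set hH := hA.1 with hHdef
  set V : Matrix (Fin n) (Fin n) ℂ := (hH.eigenvectorUnitary : Matrix (Fin n) (Fin n) ℂ) with hVdef
  have hV1 : star V * V = 1 := Unitary.coe_star_mul_self _
  have hV2 : V * star V = 1 := Unitary.coe_mul_star_self _
  set lam := hH.eigenvalues with hlam
  have hlam0 : ∀ i, 0 ≤ lam i := fun i => hA.eigenvalues_nonneg i
  set g : Fin n → ℂ := fun i => if lam i = 0 then 0 else ((Real.sqrt (lam i))⁻¹ : ℝ) with hgdef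
  set e : Fin n → ℂ := fun i => if lam i = 0 then 0 else 1 with hedef
  set M : Matrix (Fin n) (Fin n) ℂ := V * diagonal g * star V * Aᴴ with hM
  have hspec : Aᴴ * A = V * diagonal ((↑) ∘ lam) * star V := hH.spectral_theorem_old
  have hdiag : star V * (Aᴴ * A) * V = diagonal ((↑) ∘ lam) := hH.star_mul_self_mul_eq_diagonal
  have hsqrt : (hA.sqrt : Matrix (Fin n) (Fin n) ℂ) =
      V * diagonal ((↑) ∘ Real.sqrt ∘ lam) * star V := rfl
  have hcast : ∀ i, lam i ≠ 0 → ((lam i : ℝ) : ℂ) =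
      ((Real.sqrt (lam i) : ℝ) : ℂ) * ((Real.sqrt (lam i) : ℝ) : ℂ) := by
    intro i h
    rw [← Complex.ofReal_mul, Real.mul_self_sqrt (hlam0 i)]
  have hsC : ∀ i, lam i ≠ 0 → ((Real.sqrt (lam i) : ℝ) : ℂ) ≠ 0 := by
    intro i h
    have hpos : 0 < lam i := lt_of_le_of_ne (hlam0 i) (Ne.symm h)
    have : Real.sqrt (lam i) ≠ 0 := by positivity
    exact_mod_cast this
  have hd1 : diagonal g * diagonal ((↑) ∘ lam) = diagonal ((↑) ∘ Real.sqrt ∘ lam) := by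
    rw [diagonal_mul_diagonal]
    refine diagonal_congr fun i => ?_
    simp only [hgdef, Function.comp_apply]
    by_cases h : lam i = 0
    · simp [h]
    · rw [if_neg h, hcast i h]
      rw [Complex.ofReal_inv, ← mul_assoc, inv_mul_cancel₀ (hsC i h), one_mul]
  have hMA : M * A = hA.sqrt := by
    rw [hM, hsqrt]
    calc V * diagonal g * star V * Aᴴ * A
        = V * diagonal g * star V * (V * diagonal ((↑) ∘ lam) * star V) := by
          rw [mul_assoc (V * diagonal g * star V), hspec]
      _ = V * (diagonal g * ((star V * V) * diagonal ((↑) ∘ lam))) * star V := by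
          simp only [mul_assoc]
      _ = V * (diagonal g * diagonal ((↑) ∘ lam)) * star V := by rw [hV1, one_mul]
      _ = V * diagonal ((↑) ∘ Real.sqrt ∘ lam) * star V := by rw [hd1]
  refine ⟨M, ?_, hMA⟩
  have hdg : star (diagonal g) = diagonal g := by
    rw [Matrix.star_eq_conjTranspose, diagonal_conjTranspose]
    refine diagonal_congr fun i => ?_
    simp only [Pi.star_apply, hgdef]
    by_cases h : lam i = 0 <;> simp [h]
  have hde : star (diagonal e) = diagonal e := by
    rw [Matrix.star_eq_conjTranspose, diagonal_conjTranspose]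
    refine diagonal_congr fun i => ?_
    simp only [Pi.star_apply, hedef]
    by_cases h : lam i = 0 <;> simp [h]
  have hgg : diagonal g * diagonal ((↑) ∘ lam) * diagonal g = diagonal e := by
    rw [hd1, diagonal_mul_diagonal]
    refine diagonal_congr fun i => ?_
    simp only [hgdef, hedef, Function.comp_apply]
    by_cases h : lam i = 0
    · simp [h]
    · rw [if_neg h, if_neg h, Complex.ofReal_inv]
      exact mul_inv_cancel₀ (hsC i h)
  set p : Matrix (Fin n) (Fin n) ℂ := V * diagonal e * star V with hp
  have hMMs : M * star M = p := by
    have hstarM : star M = A * (V * (diagonal g * star V)) := by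
      rw [hM]
      simp only [StarMul.star_mul, star_star, hdg]
      rw [← Matrix.star_eq_conjTranspose A, star_star]
    rw [hM, hstarM, hp]
    calc V * diagonal g * star V * Aᴴ * (A * (V * (diagonal g * star V)))
        = V * diagonal g * ((star V * (Aᴴ * A) * V) * (diagonal g * star V)) := by
          simp only [mul_assoc]
      _ = V * diagonal g * ((diagonal ((↑) ∘ lam)) * (diagonal g * star V)) := by
          rw [hdiag]
      _ = V * (diagonal g * diagonal ((↑) ∘ lam) * diagonal g) * star V := by
          simp only [mul_assoc]
      _ = V * diagonal e * star V := by rw [hgg]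
  have hee : diagonal e * diagonal e = diagonal e := by
    rw [diagonal_mul_diagonal]
    refine diagonal_congr fun i => ?_
    simp only [hedef]
    by_cases h : lam i = 0 <;> simp [h]
  have hpp : p * p = p := by
    rw [hp]
    calc V * diagonal e * star V * (V * diagonal e * star V)
        = V * (diagonal e * ((star V * V) * (diagonal e * star V))) := by simp only [mul_assoc]
      _ = V * (diagonal e * (diagonal e * star V)) := by rw [hV1, one_mul]
      _ = V * (diagonal e * diagonal e) * star V := by simp only [mul_assoc]
      _ = V * (diagonal e * diagonal e * star V) := by simp only [mul_assoc]
      _ = V * diagonal e * star V := by rw [hee, mul_assoc]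
  have hps : star p = p := by
    rw [hp]
    simp only [StarMul.star_mul, star_star, hde]
    simp only [mul_assoc]
  have hpnorm : ‖p‖ ≤ 1 := by
    have h1 : ‖star p * p‖ = ‖p‖ * ‖p‖ := CStarRing.norm_star_mul_self
    rw [hps, hpp] at h1
    nlinarith [norm_nonneg p]
  have hMn2 : ‖M * star M‖ = ‖M‖ * ‖M‖ := CStarRing.norm_self_mul_star
  rw [hMMs] at hMn2
  nlinarith [norm_nonneg M, norm_nonneg p]

lemma traceNorm_nonneg {n : ℕ} (A : Matrix (Fin n) (Fin n) ℂ) : 0 ≤ traceNorm A := by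
  rw [traceNorm_eq_sum]
  exact Finset.sum_nonneg fun i _ => Real.sqrt_nonneg _

lemma exists_dual {n : ℕ} (A : Matrix (Fin n) (Fin n) ℂ) :
    ∃ M : Matrix (Fin n) (Fin n) ℂ, ‖M‖ ≤ 1 ∧ (trace (M * A)).re = traceNorm A := by
  obtain ⟨M, h1, h2⟩ := exists_achiever A
  exact ⟨M, h1, by rw [h2]; rfl⟩

lemma re_trace_le {n : ℕ} (A W : Matrix (Fin n) (Fin n) ℂ) (hW : ‖W‖ ≤ 1) :
    (trace (W * A)).re ≤ traceNorm A :=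
  le_trans (Complex.re_le_norm _) (by exact norm_trace_mul_le A W hW)

lemma neg_re_trace_le {n : ℕ} (A W : Matrix (Fin n) (Fin n) ℂ) (hW : ‖W‖ ≤ 1) :
    -(trace (W * A)).re ≤ traceNorm A := by
  have := norm_trace_mul_le A W hW
  have h2 : |(trace (W * A)).re| ≤ ‖trace (W * A)‖ := Complex.abs_re_le_norm _
  have := abs_le.mp (le_trans h2 this)
  linarith [this.1]

lemma traceNorm_add_le {n : ℕ} (A B : Matrix (Fin n) (Fin n) ℂ) :
    traceNorm (A + B) ≤ traceNorm A + traceNorm B := by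
  obtain ⟨M, h1, h2⟩ := exists_dual (A + B)
  rw [← h2, mul_add, trace_add, Complex.add_re]
  exact add_le_add (re_trace_le A M h1) (re_trace_le B M h1)

lemma traceNorm_sub_le {n : ℕ} (A B : Matrix (Fin n) (Fin n) ℂ) :
    traceNorm (A - B) ≤ traceNorm A + traceNorm B := by
  obtain ⟨M, h1, h2⟩ := exists_dual (A - B)
  rw [← h2, mul_sub, trace_sub, Complex.sub_re, sub_eq_add_neg]
  exact add_le_add (re_trace_le A M h1) (neg_re_trace_le B M h1)

lemma traceNorm_zero {n : ℕ} : traceNorm (0 : Matrix (Fin n) (Fin n) ℂ) = 0 := by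
  have h : (0 : Matrix (Fin n) (Fin n) ℂ) =
      (Matrix.posSemidef_conjTranspose_mul_self (0 : Matrix (Fin n) (Fin n) ℂ)).sqrt := by
    refine Matrix.PosSemidef.eq_sqrt_of_sq_eq Matrix.PosSemidef.zero _ ?_
    simp
  rw [traceNorm_sqrt, ← h]
  simp

lemma traceNorm_smul_le {n : ℕ} (A : Matrix (Fin n) (Fin n) ℂ) (c : ℂ) :
    traceNorm (c • A) ≤ ‖c‖ * traceNorm A := by
  obtain ⟨M, h1, h2⟩ := exists_dual (c • A)
  rw [← h2]
  rcases eq_or_ne c 0 with rfl | hc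
  · simp [traceNorm_nonneg A]
  · have hM : ‖(c • M : Matrix (Fin n) (Fin n) ℂ)‖ ≤ ‖c‖ := by
      rw [norm_smul]
      nlinarith [norm_nonneg c, norm_pos_iff.mpr hc]
    have key : trace (M * (c • A)) = trace ((c • M) * A) := by
      rw [Matrix.mul_smul, Matrix.smul_mul]
    rw [key]
    have h3 : ((‖c‖ : ℂ)⁻¹ • (c • M) : Matrix (Fin n) (Fin n) ℂ) * A = (‖c‖ : ℂ)⁻¹ • ((c • M) * A) := by
      rw [Matrix.smul_mul]
    have h4 : ‖((‖c‖ : ℂ)⁻¹ • (c • M) : Matrix (Fin n) (Fin n) ℂ)‖ ≤ 1 := by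
      rw [norm_smul]
      have : ‖((‖c‖ : ℂ)⁻¹)‖ = ‖c‖⁻¹ := by
        rw [norm_inv, Complex.norm_real, Real.norm_of_nonneg (norm_nonneg c)]
      rw [this]
      rw [inv_mul_le_iff₀ (norm_pos_iff.mpr hc)]
      nlinarith [norm_nonneg c]
    have h5 := re_trace_le A _ h4
    rw [h3, trace_smul, smul_eq_mul, ← Complex.ofReal_inv, Complex.re_ofReal_mul] at h5
    have hcpos : (0:ℝ) < ‖c‖ := norm_pos_iff.mpr hc
    calc (trace (c • M * A)).re = ‖c‖ * (‖c‖⁻¹ * (trace (c • M * A)).re) := by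
          rw [← mul_assoc, mul_inv_cancel₀ (ne_of_gt hcpos), one_mul]
      _ ≤ ‖c‖ * traceNorm A := by
          exact mul_le_mul_of_nonneg_left h5 (le_of_lt hcpos) |>.trans le_rfl

lemma traceNorm_mul_le_left {n : ℕ} (A B : Matrix (Fin n) (Fin n) ℂ) :
    traceNorm (B * A) ≤ ‖B‖ * traceNorm A := by
  obtain ⟨M, h1, h2⟩ := exists_dual (B * A)
  rw [← h2, ← mul_assoc]
  rcases eq_or_ne B 0 with rfl | hB
  · simp only [Matrix.mul_zero, Matrix.zero_mul]
    simp [traceNorm_nonneg A]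
  · have hBpos : (0:ℝ) < ‖B‖ := norm_pos_iff.mpr hB
    have h4 : ‖((‖B‖ : ℂ)⁻¹ • (M * B) : Matrix (Fin n) (Fin n) ℂ)‖ ≤ 1 := by
      rw [norm_smul, norm_inv, Complex.norm_real, Real.norm_of_nonneg (norm_nonneg B)]
      rw [inv_mul_le_iff₀ hBpos]
      nlinarith [norm_mul_le M B, norm_nonneg B]
    have h5 := re_trace_le A _ h4
    rw [Matrix.smul_mul, trace_smul, smul_eq_mul, ← Complex.ofReal_inv,
      Complex.re_ofReal_mul] at h5
    calc (trace (M * B * A)).re = ‖B‖ * (‖B‖⁻¹ * (trace (M * B * A)).re) := by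
          rw [← mul_assoc, mul_inv_cancel₀ (ne_of_gt hBpos), one_mul]
      _ ≤ ‖B‖ * traceNorm A := mul_le_mul_of_nonneg_left h5 (le_of_lt hBpos)

lemma traceNorm_mul_le_right {n : ℕ} (A B : Matrix (Fin n) (Fin n) ℂ) :
    traceNorm (A * B) ≤ traceNorm A * ‖B‖ := by
  obtain ⟨M, h1, h2⟩ := exists_dual (A * B)
  rw [← h2, ← mul_assoc, trace_mul_cycle]
  rcases eq_or_ne B 0 with rfl | hB
  · simp only [Matrix.mul_zero, Matrix.zero_mul]
    simp [traceNorm_nonneg A]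
  · have hBpos : (0:ℝ) < ‖B‖ := norm_pos_iff.mpr hB
    have h4 : ‖((‖B‖ : ℂ)⁻¹ • (B * M) : Matrix (Fin n) (Fin n) ℂ)‖ ≤ 1 := by
      rw [norm_smul, norm_inv, Complex.norm_real, Real.norm_of_nonneg (norm_nonneg B)]
      rw [inv_mul_le_iff₀ hBpos]
      nlinarith [norm_mul_le B M, norm_nonneg B]
    have h5 := re_trace_le A _ h4
    rw [Matrix.smul_mul, trace_smul, smul_eq_mul, ← Complex.ofReal_inv,
      Complex.re_ofReal_mul] at h5
    calc (trace (B * M * A)).re = (‖B‖⁻¹ * (trace (B * M * A)).re) * ‖B‖ := by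
          rw [mul_comm, ← mul_assoc, mul_inv_cancel₀ (ne_of_gt hBpos), one_mul]
      _ ≤ traceNorm A * ‖B‖ := mul_le_mul_of_nonneg_right h5 (le_of_lt hBpos)

lemma traceNorm_psd {n : ℕ} {P : Matrix (Fin n) (Fin n) ℂ} (hP : P.PosSemidef) :
    traceNorm P = (trace P).re := by
  have h : P = (Matrix.posSemidef_conjTranspose_mul_self P).sqrt := by
    refine hP.eq_sqrt_of_sq_eq _ ?_
    rw [pow_two, hP.isHermitian.eq]
  rw [traceNorm_sqrt, ← h]

lemma opNorm_eq {n : ℕ} (A : Matrix (Fin n) (Fin n) ℂ) : opNorm A = ‖A‖ := rfl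

lemma unitary_norm_le_one {n : ℕ} (W : Matrix (Fin n) (Fin n) ℂ)
    (hW : W ∈ Matrix.unitaryGroup (Fin n) ℂ) : ‖W‖ ≤ 1 := by
  have h1 : Wᴴ * W = 1 := by simpa [Matrix.star_eq_conjTranspose] using hW.1
  have h2 : ‖Wᴴ * W‖ = ‖W‖ * ‖W‖ := Matrix.l2_opNorm_conjTranspose_mul_self W
  have h3 : ‖(1 : Matrix (Fin n) (Fin n) ℂ)‖ ≤ 1 := by
    rw [Matrix.cstar_norm_def, _root_.map_one]
    exact ContinuousLinearMap.norm_id_le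
  rw [h1] at h2
  nlinarith [norm_nonneg W]

lemma kraus_sub {N : ℕ} {Φ : Matrix (Fin N) (Fin N) ℂ → Matrix (Fin N) (Fin N) ℂ}
    (hΦ : IsKrausChannel Φ) (ρ ρ' : Matrix (Fin N) (Fin N) ℂ) :
    Φ ρ - Φ ρ' = Φ (ρ - ρ') := by
  obtain ⟨m, K, hK1, hK2⟩ := hΦ
  simp only [hK2, ← Finset.sum_sub_distrib]
  refine Finset.sum_congr rfl fun j _ => ?_
  rw [Matrix.mul_sub, Matrix.sub_mul]

lemma kraus_psd {N : ℕ} {Φ : Matrix (Fin N) (Fin N) ℂ → Matrix (Fin N) (Fin N) ℂ}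
    (hΦ : IsKrausChannel Φ) {ρ : Matrix (Fin N) (Fin N) ℂ}
    (hρ : ρ.PosSemidef) : (Φ ρ).PosSemidef := by
  obtain ⟨m, K, hK1, hK2⟩ := hΦ
  rw [hK2]
  refine Finset.sum_induction _ _ (fun a b ha hb => ha.add hb) Matrix.PosSemidef.zero ?_
  exact fun j _ => hρ.mul_mul_conjTranspose_same (K j)

lemma kraus_trace {N : ℕ} {Φ : Matrix (Fin N) (Fin N) ℂ → Matrix (Fin N) (Fin N) ℂ}
    (hΦ : IsKrausChannel Φ) (ρ : Matrix (Fin N) (Fin N) ℂ) :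
    trace (Φ ρ) = trace ρ := by
  obtain ⟨m, K, hK1, hK2⟩ := hΦ
  rw [hK2, trace_sum]
  have : ∀ j, trace (K j * ρ * (K j)ᴴ) = trace ((K j)ᴴ * K j * ρ) := by
    intro j
    rw [trace_mul_cycle]
  rw [Finset.sum_congr rfl fun j _ => this j, ← trace_sum]
  congr 1
  rw [← Finset.sum_mul, hK1, one_mul]

lemma hermitian_decomp {n : ℕ} {Δ : Matrix (Fin n) (Fin n) ℂ} (hΔ : Δ.IsHermitian) :
    ∃ P Q : Matrix (Fin n) (Fin n) ℂ, P.PosSemidef ∧ Q.PosSemidef ∧ Δ = P - Q ∧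
      traceNorm Δ = (trace P).re + (trace Q).re := by
  classical
  set V : Matrix (Fin n) (Fin n) ℂ := (hΔ.eigenvectorUnitary : Matrix (Fin n) (Fin n) ℂ) with hV
  have hV1 : star V * V = 1 := Unitary.coe_star_mul_self _
  have hV2 : V * star V = 1 := Unitary.coe_mul_star_self _
  set mu := hΔ.eigenvalues with hmu
  have hspec : Δ = V * diagonal ((↑) ∘ mu) * star V := hΔ.spectral_theorem_old
  set P : Matrix (Fin n) (Fin n) ℂ := V * diagonal (fun i => ((max (mu i) 0 : ℝ) : ℂ)) * star V with hP
  set Q : Matrix (Fin n) (Fin n) ℂ := V * diagonal (fun i => ((max (-mu i) 0 : ℝ) : ℂ)) * star V with hQ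
  have hPpsd : P.PosSemidef := by
    have hd : (Matrix.diagonal (fun i => ((max (mu i) 0 : ℝ) : ℂ))).PosSemidef := by
      refine Matrix.PosSemidef.diagonal ?_
      intro i
      simpa using Complex.zero_le_real.mpr (le_max_right _ _)
    have h := hd.mul_mul_conjTranspose_same V
    rw [hP, Matrix.star_eq_conjTranspose V]
    exact h
  have hQpsd : Q.PosSemidef := by
    have hd : (Matrix.diagonal (fun i => ((max (-mu i) 0 : ℝ) : ℂ))).PosSemidef := by
      refine Matrix.PosSemidef.diagonal ?_
      intro i
      simpa using Complex.zero_le_real.mpr (le_max_right _ _)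
    have h := hd.mul_mul_conjTranspose_same V
    rw [hQ, Matrix.star_eq_conjTranspose V]
    exact h
  refine ⟨P, Q, hPpsd, hQpsd, ?_, ?_⟩
  · rw [hP, hQ, ← Matrix.sub_mul, ← Matrix.mul_sub, diagonal_sub]
    rw [hspec]
    congr 2
    refine diagonal_congr fun i => ?_
    rw [← Complex.ofReal_sub, max_zero_sub_max_neg_zero_eq_self]
    rfl
  · -- traceNorm Δ = ∑ |mu i|
    have habs : traceNorm Δ = ∑ i, |mu i| := by
      set C : Matrix (Fin n) (Fin n) ℂ := V * diagonal (fun i => ((|mu i| : ℝ) : ℂ)) * star V with hC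
      have hCpsd : C.PosSemidef := by
        have hd : (Matrix.diagonal (fun i => ((|mu i| : ℝ) : ℂ))).PosSemidef := by
          refine Matrix.PosSemidef.diagonal ?_
          intro i
          simpa using Complex.zero_le_real.mpr (abs_nonneg (mu i))
        have h := hd.mul_mul_conjTranspose_same V
        rw [hC, Matrix.star_eq_conjTranspose V]
        exact h
      have hsq : C ^ 2 = Δᴴ * Δ := by
        rw [pow_two, hΔ.eq, hC]
        calc V * diagonal (fun i => ((|mu i| : ℝ) : ℂ)) * star V *
              (V * diagonal (fun i => ((|mu i| : ℝ) : ℂ)) * star V)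
            = V * (diagonal (fun i => ((|mu i| : ℝ) : ℂ)) * ((star V * V) *
                diagonal (fun i => ((|mu i| : ℝ) : ℂ)))) * star V := by simp only [mul_assoc]
          _ = V * (diagonal (fun i => ((|mu i| : ℝ) : ℂ)) *
                diagonal (fun i => ((|mu i| : ℝ) : ℂ))) * star V := by rw [hV1, one_mul]
          _ = V * diagonal ((↑) ∘ mu) * star V *
                (V * diagonal ((↑) ∘ mu) * star V) := by
              rw [diagonal_mul_diagonal]
              calc V * diagonal (fun i => ((|mu i| : ℝ) : ℂ) * ((|mu i| : ℝ) : ℂ)) * star V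
                  = V * (diagonal ((↑) ∘ mu) * diagonal ((↑) ∘ mu)) * star V := by
                    rw [diagonal_mul_diagonal]
                    congr 1
                    refine congrArg _ (diagonal_congr fun i => ?_)
                    simp only [Function.comp_apply]
                    rw [← Complex.ofReal_mul, ← Complex.ofReal_mul, abs_mul_abs_self]
                  _ = V * (diagonal ((↑) ∘ mu) * ((star V * V) * diagonal ((↑) ∘ mu))) * star V := by
                    rw [hV1, one_mul]
                  _ = _ := by simp only [mul_assoc]
          _ = Δ * Δ := by rw [← hspec]
      have hCeq : C = (Matrix.posSemidef_conjTranspose_mul_self Δ).sqrt :=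
        hCpsd.eq_sqrt_of_sq_eq _ hsq
      rw [traceNorm_sqrt, ← hCeq, hC, trace_mul_comm, ← mul_assoc, hV1, one_mul, trace_diagonal]
      simp
    have htrP : (trace P).re = ∑ i, max (mu i) 0 := by
      rw [hP, trace_mul_comm, ← mul_assoc, hV1, one_mul, trace_diagonal]
      simp
    have htrQ : (trace Q).re = ∑ i, max (-mu i) 0 := by
      rw [hQ, trace_mul_comm, ← mul_assoc, hV1, one_mul, trace_diagonal]
      simp
    rw [habs, htrP, htrQ, ← Finset.sum_add_distrib]
    refine Finset.sum_congr rfl fun i _ => ?_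
    rcases le_total (mu i) 0 with h | h
    · rw [abs_of_nonpos h, max_eq_right h, max_eq_left (by linarith), zero_add]
    · rw [abs_of_nonneg h, max_eq_left h, max_eq_right (by linarith), add_zero]

lemma kraus_contraction {N : ℕ} {Φ : Matrix (Fin N) (Fin N) ℂ → Matrix (Fin N) (Fin N) ℂ}
    (hΦ : IsKrausChannel Φ) {Δ : Matrix (Fin N) (Fin N) ℂ} (hΔ : Δ.IsHermitian) :
    traceNorm (Φ Δ) ≤ traceNorm Δ := by
  obtain ⟨P, Q, hP, hQ, hPQ, htn⟩ := hermitian_decomp hΔ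
  have hsub : Φ Δ = Φ P - Φ Q := by
    rw [kraus_sub hΦ P Q, hPQ]
  rw [hsub, htn]
  calc traceNorm (Φ P - Φ Q) ≤ traceNorm (Φ P) + traceNorm (Φ Q) := traceNorm_sub_le _ _
    _ = (trace P).re + (trace Q).re := by
        rw [traceNorm_psd (kraus_psd hΦ hP), traceNorm_psd (kraus_psd hΦ hQ),
          kraus_trace hΦ P, kraus_trace hΦ Q]

lemma unitary_step {n : ℕ} {ρ W : Matrix (Fin n) (Fin n) ℂ} (hρ : ρ.PosSemidef)
    (htr : ρ.trace = 1) (hW : W ∈ Matrix.unitaryGroup (Fin n) ℂ) :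
    traceNorm (ρ - W * ρ * Wᴴ) ≤ 2 * ⨅ φ : {z : ℂ // ‖z‖ = 1}, opNorm (1 - (φ : ℂ) • W) := by
  have hne : Nonempty {z : ℂ // ‖z‖ = 1} := ⟨⟨1, by simp⟩⟩
  have htnρ : traceNorm ρ = 1 := by
    rw [traceNorm_psd hρ, htr]
    simp
  have key : ∀ φ : {z : ℂ // ‖z‖ = 1}, traceNorm (ρ - W * ρ * Wᴴ) ≤ 2 * opNorm (1 - (φ : ℂ) • W) := by
    intro ⟨φ, hφ⟩
    set W' : Matrix (Fin n) (Fin n) ℂ := φ • W with hW'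
    have hφ1 : φ * star φ = 1 := by
      rw [Complex.star_def, Complex.mul_conj]
      rw [← Complex.sq_norm, hφ]
      norm_num
    have hWeq : W' * ρ * W'ᴴ = W * ρ * Wᴴ := by
      rw [hW', Matrix.conjTranspose_smul, Matrix.smul_mul, Matrix.smul_mul, Matrix.mul_smul,
        smul_smul, hφ1, one_smul]
    have hW'n : ‖W'‖ ≤ 1 := by
      rw [hW', norm_smul, hφ, one_mul]
      exact unitary_norm_le_one W hW
    have hdecomp : ρ - W' * ρ * W'ᴴ = (1 - W') * ρ + W' * (ρ * (1 - W')ᴴ) := by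
      rw [Matrix.conjTranspose_sub, Matrix.conjTranspose_one]
      rw [Matrix.sub_mul, Matrix.mul_sub, Matrix.mul_sub, one_mul, Matrix.mul_one]
      rw [← mul_assoc]
      abel
    have h1 : traceNorm ((1 - W') * ρ) ≤ ‖(1 : Matrix (Fin n) (Fin n) ℂ) - W'‖ := by
      calc traceNorm ((1 - W') * ρ) ≤ ‖(1 : Matrix (Fin n) (Fin n) ℂ) - W'‖ * traceNorm ρ :=
            traceNorm_mul_le_left _ _
        _ = _ := by rw [htnρ, mul_one]
    have h2 : traceNorm (W' * (ρ * (1 - W')ᴴ)) ≤ ‖(1 : Matrix (Fin n) (Fin n) ℂ) - W'‖ := by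
      calc traceNorm (W' * (ρ * (1 - W')ᴴ)) ≤ ‖W'‖ * traceNorm (ρ * (1 - W')ᴴ) :=
            traceNorm_mul_le_left _ _
        _ ≤ ‖W'‖ * (traceNorm ρ * ‖((1 : Matrix (Fin n) (Fin n) ℂ) - W')ᴴ‖) := by
            refine mul_le_mul_of_nonneg_left ?_ (norm_nonneg _)
            exact traceNorm_mul_le_right _ _
        _ = ‖W'‖ * ‖(1 : Matrix (Fin n) (Fin n) ℂ) - W'‖ := by
            rw [htnρ, one_mul, Matrix.l2_opNorm_conjTranspose]
        _ ≤ 1 * ‖(1 : Matrix (Fin n) (Fin n) ℂ) - W'‖ :=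
            mul_le_mul_of_nonneg_right hW'n (norm_nonneg _)
        _ = _ := one_mul _
    calc traceNorm (ρ - W * ρ * Wᴴ) = traceNorm ((1 - W') * ρ + W' * (ρ * (1 - W')ᴴ)) := by
          rw [← hWeq, hdecomp]
      _ ≤ traceNorm ((1 - W') * ρ) + traceNorm (W' * (ρ * (1 - W')ᴴ)) := traceNorm_add_le _ _
      _ ≤ 2 * ‖(1 : Matrix (Fin n) (Fin n) ℂ) - W'‖ := by linarith
      _ = 2 * opNorm (1 - φ • W) := by rw [opNorm_eq, hW']
  have h6 : traceNorm (ρ - W * ρ * Wᴴ) / 2 ≤ ⨅ φ : {z : ℂ // ‖z‖ = 1}, opNorm (1 - (φ : ℂ) • W) := by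
    refine le_ciInf fun φ => ?_
    linarith [key φ]
  linarith

lemma conjTranspose_kron {l m p q : Type*} (A : Matrix l m ℂ) (B : Matrix p q ℂ) :
    (A ⊗ₖ B)ᴴ = Aᴴ ⊗ₖ Bᴴ := by
  ext ⟨i, j⟩ ⟨k, l⟩
  simp [conjTranspose_apply, mul_comm]

lemma psd_kron {p q : Type*} [Fintype p] [Fintype q] [DecidableEq p] [DecidableEq q]
    {P : Matrix p p ℂ} {Q : Matrix q q ℂ}
    (hP : P.PosSemidef) (hQ : Q.PosSemidef) : (P ⊗ₖ Q).PosSemidef := by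
  exact hP.kronecker hQ

lemma psd_reindex {m n : Type*} [Fintype m] [Fintype n] [DecidableEq m] [DecidableEq n]
    {M : Matrix m m ℂ} (hM : M.PosSemidef) (e : m ≃ n) :
    (Matrix.reindex e e M).PosSemidef := by
  rw [Matrix.reindex_apply]
  exact hM.submatrix e.symm

lemma trace_reindex {m n : Type*} [Fintype m] [Fintype n] (e : m ≃ n)
    (M : Matrix m m ℂ) : trace (Matrix.reindex e e M) = trace M := by
  rw [Matrix.trace, Matrix.trace]
  exact Equiv.sum_comp e.symm fun j => M j j

lemma reindex_mul {m n : Type*} [Fintype m] [Fintype n] [DecidableEq m] [DecidableEq n]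
    (e : m ≃ n) (A B : Matrix m m ℂ) :
    Matrix.reindex e e A * Matrix.reindex e e B = Matrix.reindex e e (A * B) := by
  simp only [Matrix.reindex_apply]
  exact Matrix.submatrix_mul_equiv A B _ _ _

lemma reindex_conjTranspose {m n : Type*} [Fintype m] [Fintype n] (e : m ≃ n)
    (A : Matrix m m ℂ) : (Matrix.reindex e e A)ᴴ = Matrix.reindex e e Aᴴ := by
  simp [Matrix.reindex_apply, Matrix.conjTranspose_submatrix]

lemma reindex_sub {m n : Type*} [Fintype m] [Fintype n] (e : m ≃ n)
    (A B : Matrix m m ℂ) :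
    Matrix.reindex e e A - Matrix.reindex e e B = Matrix.reindex e e (A - B) := by
  ext i j
  simp [Matrix.reindex_apply]

lemma sub_kron {p q : Type*} (A B : Matrix p p ℂ) (R : Matrix q q ℂ) :
    (A - B) ⊗ₖ R = A ⊗ₖ R - B ⊗ₖ R := by
  ext ⟨i, j⟩ ⟨k, l⟩
  simp [sub_mul]

lemma traceNorm_reindex_kron {p q N : ℕ} (e : Fin p × Fin q ≃ Fin N)
    (Δ : Matrix (Fin p) (Fin p) ℂ) (R : Matrix (Fin q) (Fin q) ℂ)
    (hR : R.PosSemidef) (htrR : R.trace = 1) :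
    traceNorm ((Matrix.reindex e e (Δ ⊗ₖ R) : Matrix (Fin N) (Fin N) ℂ)) = traceNorm Δ := by
  set S := (Matrix.posSemidef_conjTranspose_mul_self Δ).sqrt with hS
  have hSpsd : S.PosSemidef := (Matrix.posSemidef_conjTranspose_mul_self Δ).posSemidef_sqrt
  have hSS : S * S = Δᴴ * Δ := (Matrix.posSemidef_conjTranspose_mul_self Δ).sqrt_mul_self
  set C : Matrix (Fin p × Fin q) (Fin p × Fin q) ℂ := S ⊗ₖ R with hC
  have hCpsd : C.PosSemidef := psd_kron hSpsd hR
  set T : Matrix (Fin N) (Fin N) ℂ := Matrix.reindex e e (Δ ⊗ₖ R) with hT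
  have hsq : (Matrix.reindex e e C : Matrix (Fin N) (Fin N) ℂ) ^ 2 = Tᴴ * T := by
    rw [pow_two, reindex_mul, hT, reindex_conjTranspose, reindex_mul]
    congr 1
    rw [← Matrix.mul_kronecker_mul, hSS, conjTranspose_kron, ← Matrix.mul_kronecker_mul,
      hR.isHermitian.eq]
  have hCeq : (Matrix.reindex e e C : Matrix (Fin N) (Fin N) ℂ) =
      (Matrix.posSemidef_conjTranspose_mul_self T).sqrt :=
    (psd_reindex hCpsd e).eq_sqrt_of_sq_eq _ hsq
  have : traceNorm T = (trace (Matrix.reindex e e C : Matrix (Fin N) (Fin N) ℂ)).re := by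
    rw [traceNorm_sqrt, ← hCeq]
  rw [this, trace_reindex, hC, Matrix.trace_kronecker, htrR, mul_one, traceNorm_sqrt]

lemma unitary_conj_trace {N : ℕ} {W : Matrix (Fin N) (Fin N) ℂ}
    (hW : W ∈ Matrix.unitaryGroup (Fin N) ℂ) (ρ : Matrix (Fin N) (Fin N) ℂ) :
    trace (W * ρ * Wᴴ) = trace ρ := by
  rw [trace_mul_cycle]
  have h1 : Wᴴ * W = 1 := by simpa [Matrix.star_eq_conjTranspose] using hW.1
  rw [h1, one_mul]

lemma telescope {N : ℕ} (m : ℕ)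
    (E : Fin m → Matrix (Fin N) (Fin N) ℂ → Matrix (Fin N) (Fin N) ℂ)
    (U : Fin m → Matrix (Fin N) (Fin N) ℂ)
    (hE : ∀ i, IsKrausChannel (E i)) (hU : ∀ i, U i ∈ Matrix.unitaryGroup (Fin N) ℂ)
    (ρ ρ' : Matrix (Fin N) (Fin N) ℂ)
    (hρ1 : ρ.PosSemidef) (hρ2 : ρ.trace = 1) (hρ'1 : ρ'.PosSemidef) (hρ'2 : ρ'.trace = 1) :
    traceNorm ((List.ofFn E).foldl (fun ρ Φ => Φ ρ) ρ -
        (List.ofFn (fun i => fun σ => U i * E i σ * (U i)ᴴ)).foldl (fun ρ Φ => Φ ρ) ρ') ≤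
      traceNorm (ρ - ρ') + ∑ i, 2 * ⨅ φ : {z : ℂ // ‖z‖ = 1}, opNorm (1 - (φ : ℂ) • U i) := by
  induction m generalizing ρ ρ' with
  | zero =>
    simp
  | succ m ih =>
    rw [List.ofFn_succ, List.ofFn_succ, List.foldl_cons, List.foldl_cons]
    have hρ1' : (E 0 ρ).PosSemidef := kraus_psd (hE 0) hρ1
    have hρ2' : (E 0 ρ).trace = 1 := by rw [kraus_trace (hE 0), hρ2]
    have hσ1 : (U 0 * E 0 ρ' * (U 0)ᴴ).PosSemidef :=
      (kraus_psd (hE 0) hρ'1).mul_mul_conjTranspose_same (U 0)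
    have hσ2 : (U 0 * E 0 ρ' * (U 0)ᴴ).trace = 1 := by
      rw [unitary_conj_trace (hU 0), kraus_trace (hE 0), hρ'2]
    have step := ih (fun i => E i.succ) (fun i => U i.succ) (fun i => hE i.succ)
      (fun i => hU i.succ) (E 0 ρ) (U 0 * E 0 ρ' * (U 0)ᴴ) hρ1' hρ2' hσ1 hσ2
    refine le_trans step ?_
    have hkey : traceNorm (E 0 ρ - U 0 * E 0 ρ' * (U 0)ᴴ) ≤ traceNorm (ρ - ρ') +
        2 * ⨅ φ : {z : ℂ // ‖z‖ = 1}, opNorm (1 - (φ : ℂ) • U 0) := by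
      have hsplit : E 0 ρ - U 0 * E 0 ρ' * (U 0)ᴴ =
          (E 0 ρ - E 0 ρ') + (E 0 ρ' - U 0 * E 0 ρ' * (U 0)ᴴ) := by
        abel
      rw [hsplit]
      refine le_trans (traceNorm_add_le _ _) ?_
      have h1 : traceNorm (E 0 ρ - E 0 ρ') ≤ traceNorm (ρ - ρ') := by
        rw [kraus_sub (hE 0)]
        exact kraus_contraction (hE 0) (hρ1.isHermitian.sub hρ'1.isHermitian)
      have h2 : traceNorm (E 0 ρ' - U 0 * E 0 ρ' * (U 0)ᴴ) ≤
          2 * ⨅ φ : {z : ℂ // ‖z‖ = 1}, opNorm (1 - (φ : ℂ) • U 0) :=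
        unitary_step (kraus_psd (hE 0) hρ'1) (by rw [kraus_trace (hE 0), hρ'2]) (hU 0)
      linarith
    rw [Fin.sum_univ_succ]
    linarith

lemma vecMulVec_star_psd {q : ℕ} (a : Fin q → ℂ) :
    (Matrix.vecMulVec a (star a)).PosSemidef := by
  rw [Matrix.vecMulVec_eq Unit, ← Matrix.conjTranspose_replicateCol]
  exact Matrix.posSemidef_self_mul_conjTranspose _

lemma vecMulVec_star_trace {q : ℕ} (a : Fin q → ℂ) (ha : ∑ i, ‖a i‖ ^ 2 = 1) :
    (Matrix.vecMulVec a (star a)).trace = 1 := by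
  rw [Matrix.trace]
  have : ∀ i, (Matrix.vecMulVec a (star a)).diag i = ((‖a i‖ ^ 2 : ℝ) : ℂ) := by
    intro i
    rw [Matrix.diag_apply, Matrix.vecMulVec_apply, Pi.star_apply, Complex.star_def,
      Complex.mul_conj, Complex.normSq_eq_norm_sq]
  rw [Finset.sum_congr rfl fun i _ => this i, ← Complex.ofReal_sum]
  rw [ha]
  norm_num


/-- The intermediate trace-norm bound in the proof of Theorem 1: the trace distance
between the outputs of the original and the attacked classifier circuits is bounded
by twice the sum of the phase-optimized operator-norm distances of the adversarial
gates to the identity. -/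
theorem trace_norm_output_bound (d da n : ℕ)
    (E : Fin n → Matrix (Fin (2 ^ (d + da))) (Fin (2 ^ (d + da))) ℂ →
      Matrix (Fin (2 ^ (d + da))) (Fin (2 ^ (d + da))) ℂ)
    (hE : ∀ i, IsKrausChannel (E i))
    (U0 : Matrix (Fin (2 ^ d)) (Fin (2 ^ d)) ℂ)
    (hU0 : U0 ∈ Matrix.unitaryGroup (Fin (2 ^ d)) ℂ)
    (U : Fin n → Matrix (Fin (2 ^ (d + da))) (Fin (2 ^ (d + da))) ℂ)
    (hU : ∀ i, U i ∈ Matrix.unitaryGroup (Fin (2 ^ (d + da))) ℂ)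
    (σ : Matrix (Fin (2 ^ d)) (Fin (2 ^ d)) ℂ)
    (hσ : σ.PosSemidef ∧ σ.trace = 1)
    (a : Fin (2 ^ da) → ℂ) (ha : ∑ i, ‖a i‖ ^ 2 = 1)
    -- the Kronecker-product embedding `ρ ⊗ aaᴴ`, reindexed to live on `Fin (2 ^ (d + da))`
    (emb : Matrix (Fin (2 ^ d)) (Fin (2 ^ d)) ℂ →
      Matrix (Fin (2 ^ (d + da))) (Fin (2 ^ (d + da))) ℂ)
    (hemb : ∀ ρ, emb ρ =
      Matrix.reindex (finProdFinEquiv.trans (finCongr (pow_add 2 d da).symm))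
        (finProdFinEquiv.trans (finCongr (pow_add 2 d da).symm))
        (ρ ⊗ₖ Matrix.vecMulVec a (star a))) :
    traceNorm ((List.ofFn E).foldl (fun ρ Φ => Φ ρ) (emb σ) -
        (List.ofFn (fun i => fun ρ => U i * E i ρ * (U i)ᴴ)).foldl (fun ρ Φ => Φ ρ)
          (emb (U0 * σ * U0ᴴ))) ≤
      2 * ((⨅ φ : {z : ℂ // ‖z‖ = 1}, opNorm (1 - (φ : ℂ) • U0)) +
        ∑ i, ⨅ φ : {z : ℂ // ‖z‖ = 1}, opNorm (1 - (φ : ℂ) • U i)) := by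
  set e := finProdFinEquiv.trans (finCongr (pow_add 2 d da).symm) with he
  set R := Matrix.vecMulVec a (star a) with hR
  have hRpsd : R.PosSemidef := vecMulVec_star_psd a
  have hRtr : R.trace = 1 := vecMulVec_star_trace a ha
  set σ' := U0 * σ * U0ᴴ with hσ'
  have hσ'psd : σ'.PosSemidef := hσ.1.mul_mul_conjTranspose_same U0
  have hσ'tr : σ'.trace = 1 := by rw [hσ', unitary_conj_trace hU0, hσ.2]
  have hpsd1 : (emb σ).PosSemidef := by
    rw [hemb]
    exact psd_reindex (psd_kron hσ.1 hRpsd) e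
  have htr1 : (emb σ).trace = 1 := by
    rw [hemb, trace_reindex, Matrix.trace_kronecker, hσ.2, hRtr, mul_one]
  have hpsd2 : (emb σ').PosSemidef := by
    rw [hemb]
    exact psd_reindex (psd_kron hσ'psd hRpsd) e
  have htr2 : (emb σ').trace = 1 := by
    rw [hemb, trace_reindex, Matrix.trace_kronecker, hσ'tr, hRtr, mul_one]
  have hdiff : traceNorm (emb σ - emb σ') = traceNorm (σ - σ') := by
    rw [hemb, hemb, reindex_sub, ← sub_kron]
    exact traceNorm_reindex_kron e _ R hRpsd hRtr
  have hstep0 : traceNorm (σ - σ') ≤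
      2 * ⨅ φ : {z : ℂ // ‖z‖ = 1}, opNorm (1 - (φ : ℂ) • U0) :=
    unitary_step hσ.1 hσ.2 hU0
  have hmain := telescope n E U hE hU (emb σ) (emb σ') hpsd1 htr1 hpsd2 htr2
  rw [hdiff] at hmain
  have hsum : ∑ i, 2 * ⨅ φ : {z : ℂ // ‖z‖ = 1}, opNorm (1 - (φ : ℂ) • U i) =
      2 * ∑ i, ⨅ φ : {z : ℂ // ‖z‖ = 1}, opNorm (1 - (φ : ℂ) • U i) := by
    rw [Finset.mul_sum]
  rw [hsum] at hmain
  calc traceNorm _ ≤ traceNorm (σ - σ') +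
        2 * ∑ i, ⨅ φ : {z : ℂ // ‖z‖ = 1}, opNorm (1 - (φ : ℂ) • U i) := hmain
    _ ≤ _ := by linarith
end

section
/- Let D ≥ 1, let μ be the Haar probability measure on U(D), let e₀ ∈ ℂ^D be the first standard basis vector, and write X_W = W e₀ e₀ᴴ Wᴴ. Then for any D×D complex matrices M₁ and M₂, ∫_{U(D)} Tr(M₁ X_W) · Tr(M₂ X_W) dμ(W) = (Tr(M₁) Tr(M₂) + Tr(M₁ M₂)) / (D(D+1)). -/
open Matrix MeasureTheory Complex

/-- The entrywise measurable space structure on matrices. -/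
noncomputable local instance {m n : Type*} : MeasurableSpace (Matrix m n ℂ) :=
  inferInstanceAs (MeasurableSpace (m → n → ℂ))

/-- The first standard basis vector of `ℂ^D`. -/
noncomputable def e0 {D : ℕ} : Fin D → ℂ := fun i => if (i : ℕ) = 0 then 1 else 0

namespace HM

variable {D : ℕ}

abbrev UG (D : ℕ) := Matrix.unitaryGroup (Fin D) ℂ

lemma measurable_entry (i j : Fin D) :
    Measurable fun W : UG D => (W : Matrix (Fin D) (Fin D) ℂ) i j :=
  (measurable_pi_apply j).comp ((measurable_pi_apply i).comp measurable_subtype_coe)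

local instance : MeasurableMul (UG D) := by
  constructor <;> intro c <;>
    (apply Measurable.subtype_mk; apply measurable_pi_lambda; intro i;
     apply measurable_pi_lambda; intro j; simp only [Matrix.mul_apply])
  · exact Finset.measurable_sum _ fun k _ => (measurable_entry k j).const_mul _
  · exact Finset.measurable_sum _ fun k _ => (measurable_entry i k).mul_const _

noncomputable def q (a b c d j : Fin D) (W : UG D) : ℂ :=
  (W : Matrix (Fin D) (Fin D) ℂ) a j * (starRingEnd ℂ) ((W : Matrix (Fin D) (Fin D) ℂ) b j) *
    ((W : Matrix (Fin D) (Fin D) ℂ) c j * (starRingEnd ℂ) ((W : Matrix (Fin D) (Fin D) ℂ) d j))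

lemma measurable_q (a b c d j : Fin D) : Measurable (q a b c d j) := by
  have hc : Measurable (starRingEnd ℂ) := Complex.continuous_conj.measurable
  exact ((measurable_entry a j).mul (hc.comp (measurable_entry b j))).mul
    ((measurable_entry c j).mul (hc.comp (measurable_entry d j)))

lemma norm_q_le (a b c d j : Fin D) (W : UG D) : ‖q a b c d j W‖ ≤ 1 := by
  unfold q
  simp only [norm_mul, RCLike.norm_conj]
  have h := fun i => entry_norm_bound_of_unitary W.2 i j
  calc ‖(W : Matrix (Fin D) (Fin D) ℂ) a j‖ * ‖(W : Matrix (Fin D) (Fin D) ℂ) b j‖ *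
      (‖(W : Matrix (Fin D) (Fin D) ℂ) c j‖ * ‖(W : Matrix (Fin D) (Fin D) ℂ) d j‖) ≤ 1*1*(1*1) := by
        gcongr
        · exact h a
        · exact h b
        · exact h c
        · exact h d
    _ ≤ 1 := by norm_num

lemma integrable_q (μ : Measure (UG D)) [IsProbabilityMeasure μ] (a b c d j : Fin D) :
    Integrable (q a b c d j) μ :=
  (integrable_const (1 : ℝ)).mono' (measurable_q a b c d j).aestronglyMeasurable
    (Filter.Eventually.of_forall (norm_q_le a b c d j))

noncomputable def Tm (μ : Measure (UG D)) (a b c d j : Fin D) : ℂ := ∫ W, q a b c d j W ∂μ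

variable (μ : Measure (UG D)) [μ.IsHaarMeasure] [IsProbabilityMeasure μ]

lemma Tm_inv (U : UG D) (a b c d j : Fin D) :
    (∫ W, q a b c d j (U * W) ∂μ) = Tm μ a b c d j :=
  integral_mul_left_eq_self (q a b c d j) U

lemma entry_mul (U W : UG D) (x y : Fin D) :
    ((U * W : UG D) : Matrix (Fin D) (Fin D) ℂ) x y
      = ∑ k, (U : Matrix (Fin D) (Fin D) ℂ) x k * (W : Matrix (Fin D) (Fin D) ℂ) k y :=
  Matrix.mul_apply

/-- phase relation -/
lemma Tm_phase (r a b c d j : Fin D) :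
    Tm μ a b c d j = ((if a = r then Complex.I else 1) * (if b = r then -Complex.I else 1)
      * ((if c = r then Complex.I else 1) * (if d = r then -Complex.I else 1))) * Tm μ a b c d j := by
  have hmem : Matrix.diagonal (fun k => if k = r then Complex.I else 1)
      ∈ Matrix.unitaryGroup (Fin D) ℂ := by
    rw [Matrix.mem_unitaryGroup_iff]
    ext i k
    simp [Matrix.star_eq_conjTranspose, Matrix.diagonal_conjTranspose, Matrix.diagonal_mul_diagonal,
      Matrix.diagonal_apply, Matrix.one_apply]
    split_ifs <;> simp_all [Complex.ext_iff]
  set U : UG D := ⟨_, hmem⟩ with hU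
  have hentry : ∀ (W : UG D) (x : Fin D),
      ((U * W : UG D) : Matrix (Fin D) (Fin D) ℂ) x j
        = (if x = r then Complex.I else 1) * (W : Matrix (Fin D) (Fin D) ℂ) x j := by
    intro W x
    have : ((U * W : UG D) : Matrix (Fin D) (Fin D) ℂ)
        = Matrix.diagonal (fun k => if k = r then Complex.I else 1)
          * (W : Matrix (Fin D) (Fin D) ℂ) := rfl
    rw [this, Matrix.diagonal_mul]
  have key : ∀ W : UG D, q a b c d j (U * W)
      = ((if a = r then Complex.I else 1) * (if b = r then -Complex.I else 1)
        * ((if c = r then Complex.I else 1) * (if d = r then -Complex.I else 1))) * q a b c d j W := by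
    intro W
    unfold q
    rw [hentry W a, hentry W b, hentry W c, hentry W d, RingHom.map_mul, RingHom.map_mul]
    have hcb : (starRingEnd ℂ) (if b = r then Complex.I else 1) = (if b = r then -Complex.I else 1) := by
      split_ifs <;> simp
    have hcd : (starRingEnd ℂ) (if d = r then Complex.I else 1) = (if d = r then -Complex.I else 1) := by
      split_ifs <;> simp
    rw [hcb, hcd]
    ring
  calc Tm μ a b c d j = ∫ W, q a b c d j (U * W) ∂μ := (Tm_inv μ U a b c d j).symm
    _ = ∫ W, ((if a = r then Complex.I else 1) * (if b = r then -Complex.I else 1)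
        * ((if c = r then Complex.I else 1) * (if d = r then -Complex.I else 1))) * q a b c d j W ∂μ := by
        exact integral_congr_ae (Filter.Eventually.of_forall key)
    _ = _ := by rw [MeasureTheory.integral_const_mul]; rfl

/-- permutation relation -/
lemma Tm_perm (σ : Equiv.Perm (Fin D)) (a b c d j : Fin D) :
    Tm μ (σ a) (σ b) (σ c) (σ d) j = Tm μ a b c d j := by
  have hmem : (σ⁻¹ : Equiv.Perm (Fin D)).permMatrix ℂ ∈ Matrix.unitaryGroup (Fin D) ℂ := by
    rw [Matrix.mem_unitaryGroup_iff]
    ext i k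
    rw [Matrix.mul_apply, Matrix.one_apply]
    simp only [Matrix.star_eq_conjTranspose, Matrix.conjTranspose_apply, PEquiv.toMatrix_apply,
      Equiv.toPEquiv_apply, Option.mem_def, Option.some_inj]
    simp only [ite_mul, one_mul, zero_mul]
    rw [Finset.sum_ite_eq]
    simp [(σ⁻¹ : Equiv.Perm (Fin D)).injective.eq_iff, eq_comm]
  set U : UG D := ⟨_, hmem⟩ with hU
  have hentry : ∀ (W : UG D) (x : Fin D),
      ((U * W : UG D) : Matrix (Fin D) (Fin D) ℂ) x j
        = (W : Matrix (Fin D) (Fin D) ℂ) (σ⁻¹ x) j := by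
    intro W x
    have : ((U * W : UG D) : Matrix (Fin D) (Fin D) ℂ)
        = (σ⁻¹ : Equiv.Perm (Fin D)).permMatrix ℂ * (W : Matrix (Fin D) (Fin D) ℂ) := rfl
    rw [this, PEquiv.toMatrix_toPEquiv_mul]
    rfl
  have key : ∀ W : UG D, q (σ a) (σ b) (σ c) (σ d) j (U * W) = q a b c d j W := by
    intro W
    unfold q
    rw [hentry W, hentry W, hentry W, hentry W]
    simp
  calc Tm μ (σ a) (σ b) (σ c) (σ d) j
      = ∫ W, q (σ a) (σ b) (σ c) (σ d) j (U * W) ∂μ := (Tm_inv μ U _ _ _ _ j).symm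
    _ = ∫ W, q a b c d j W ∂μ := integral_congr_ae (Filter.Eventually.of_forall key)
    _ = Tm μ a b c d j := rfl

noncomputable def hs : ℂ := (Real.sqrt 2 : ℂ)⁻¹

lemma hs_conj : (starRingEnd ℂ) hs = hs := by
  simp [hs, Complex.conj_ofReal, map_inv₀]

lemma hs_sq : hs * hs = 2⁻¹ := by
  rw [hs, ← mul_inv, ← Complex.ofReal_mul, Real.mul_self_sqrt (by norm_num)]
  norm_num

lemma hs_sq' : hs ^ 2 = 2⁻¹ := by rw [sq]; exact hs_sq


noncomputable def had (D : ℕ) : Matrix (Fin D) (Fin D) ℂ := fun i k =>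
  if (i : ℕ) ≤ 1 ∧ (k : ℕ) ≤ 1 then (if (i : ℕ) = 1 ∧ (k : ℕ) = 1 then -hs else hs)
  else if i = k then 1 else 0

lemma had_conj (i k : Fin D) : (starRingEnd ℂ) (had D i k) = had D i k := by
  unfold had
  split_ifs <;> simp [hs_conj]

lemma had_mem (hD2 : 2 ≤ D) : had D ∈ Matrix.unitaryGroup (Fin D) ℂ := by
  rw [Matrix.mem_unitaryGroup_iff]
  have h0 : (0 : ℕ) < D := by omega
  have h1 : (1 : ℕ) < D := by omega
  set z0 : Fin D := ⟨0, h0⟩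
  set z1 : Fin D := ⟨1, h1⟩
  have hz : z0 ≠ z1 := by simp [z0, z1, Fin.ext_iff]
  ext i k
  rw [Matrix.mul_apply, Matrix.one_apply]
  simp only [Matrix.star_eq_conjTranspose, Matrix.conjTranspose_apply, Complex.star_def, had_conj]
  by_cases hi : (i : ℕ) ≤ 1
  · rw [Finset.sum_eq_add z0 z1 hz ?_ (fun h => absurd (Finset.mem_univ z0) h)
      (fun h => absurd (Finset.mem_univ z1) h)]
    · by_cases hk : (k : ℕ) ≤ 1
      · -- both small: four cases on values
        have hi' : (i : ℕ) = 0 ∨ (i : ℕ) = 1 := by omega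
        have hk' : (k : ℕ) = 0 ∨ (k : ℕ) = 1 := by omega
        have hik : (i = k) ↔ ((i : ℕ) = (k : ℕ)) := Fin.ext_iff
        rcases hi' with h|h <;> rcases hk' with h'|h' <;>
          simp [had, z0, z1, h, h', hik] <;> ring_nf <;> simp [hs_sq', hs_sq] <;> norm_num
      · -- k large: result 0
        have hik : i ≠ k := by intro e; rw [e] at hi; omega
        have hk0 : k ≠ z0 := by intro e; rw [e] at hk; simp [z0] at hk
        have hk1 : k ≠ z1 := by intro e; rw [e] at hk; simp [z1] at hk
        simp [had, z0, z1, hi, hk, hik, hk0, hk1]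
    · intro c _ hc
      have hc2 : ¬ ((c : ℕ) ≤ 1) := by
        rcases Nat.lt_or_ge (c : ℕ) 2 with h|h
        · exfalso
          have : (c : ℕ) = 0 ∨ (c : ℕ) = 1 := by omega
          rcases this with h'|h'
          · exact hc.1 (by simp [z0, Fin.ext_iff, h'])
          · exact hc.2 (by simp [z1, Fin.ext_iff, h'])
        · omega
      have hic : i ≠ c := by intro e; rw [← e] at hc2; omega
      simp [had, hc2, hic]
  · -- i large: row i of had is e_i
    rw [Finset.sum_eq_single i ?_ (fun h => absurd (Finset.mem_univ i) h)]
    · by_cases hk : (k : ℕ) ≤ 1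
      · have hki : k ≠ i := by intro e; rw [e] at hk; omega
        simp [had, hi, hk, hki, Ne.symm hki]
      · simp [had, hi, hk, eq_comm]
    · intro c _ hc
      simp only [had]
      rw [if_neg (by tauto), if_neg (Ne.symm hc), zero_mul]

/-- vanishing lemma -/
lemma Tm_vanish {a b c d : Fin D} (j : Fin D)
    (h1 : ¬(a = b ∧ c = d)) (h2 : ¬(a = d ∧ c = b)) : Tm μ a b c d j = 0 := by
  -- choose r and derive Tm = f * Tm with f ≠ 1
  have main : ∀ r : Fin D,
      ((if a = r then Complex.I else 1) * (if b = r then -Complex.I else 1)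
        * ((if c = r then Complex.I else 1) * (if d = r then -Complex.I else 1))) ≠ 1 →
      Tm μ a b c d j = 0 := by
    intro r hf
    have h := Tm_phase μ r a b c d j
    have h0 : (((if a = r then Complex.I else 1) * (if b = r then -Complex.I else 1)
        * ((if c = r then Complex.I else 1) * (if d = r then -Complex.I else 1))) - 1)
        * Tm μ a b c d j = 0 := by linear_combination -h
    rcases mul_eq_zero.mp h0 with h' | h'
    · exact (hf (sub_eq_zero.mp h')).elim
    · exact h'
  by_cases hab : a = b
  · -- then ¬ c = d
    have hcd : c ≠ d := fun h => h1 ⟨hab, h⟩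
    apply main c
    subst hab
    rw [if_pos rfl, if_neg (Ne.symm hcd)]
    rcases eq_or_ne a c with h | h
    · rw [if_pos h, if_pos h]
      simp [Complex.ext_iff]
    · rw [if_neg h, if_neg h]
      simp [Complex.ext_iff]
  · by_cases hcd : c = d
    · apply main a
      subst hcd
      rw [if_pos rfl, if_neg (Ne.symm hab)]
      rcases eq_or_ne c a with h | h
      · rw [if_pos h, if_pos h]
        simp [Complex.ext_iff]
      · rw [if_neg h, if_neg h]
        simp [Complex.ext_iff]
    · by_cases had : a = d
      · have hcb : c ≠ b := fun h => h2 ⟨had, h⟩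
        apply main c
        have hac : a ≠ c := by
          intro h
          exact hcd (h ▸ had.symm ▸ rfl)
        rw [if_neg hac, if_neg (fun h : b = c => hcb h.symm), if_pos rfl,
          if_neg (fun h : d = c => hcd h.symm)]
        simp [Complex.ext_iff]
      · apply main a
        rw [if_pos rfl, if_neg (Ne.symm hab), if_neg (Ne.symm had)]
        rcases eq_or_ne c a with h | h
        · rw [if_pos h]
          simp only [mul_one, one_mul, Complex.I_mul_I]
          norm_num
        · rw [if_neg h]
          simp [Complex.ext_iff]

/-- rearrangement: Tm a c c a = Tm a a c c -/
lemma Tm_rearr (a c j : Fin D) : Tm μ a c c a j = Tm μ a a c c j := by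
  unfold Tm
  apply integral_congr_ae
  apply Filter.Eventually.of_forall
  intro W
  unfold q
  ring

lemma Tm_diag (a e : Fin D) (j : Fin D) : Tm μ a a a a j = Tm μ e e e e j := by
  have := Tm_perm μ (Equiv.swap e a) e e e e j
  rwa [Equiv.swap_apply_left] at this

lemma Tm_offdiag {a c e f : Fin D} (j : Fin D) (hac : a ≠ c) (hef : e ≠ f) :
    Tm μ a a c c j = Tm μ e e f f j := by
  set σ₁ : Equiv.Perm (Fin D) := Equiv.swap e a with hσ₁
  set c'' : Fin D := σ₁ c with hc''
  have hc0 : c'' ≠ e := by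
    intro h
    have : c = σ₁ e := by
      rw [← h, hc'']
      simp [σ₁]
    rw [Equiv.swap_apply_left] at this
    exact hac this.symm
  set σ₂ : Equiv.Perm (Fin D) := Equiv.swap f c'' with hσ₂
  set σ : Equiv.Perm (Fin D) := σ₁.trans σ₂ with hσ
  have h1 : σ a = e := by
    have : σ₁ a = e := Equiv.swap_apply_right e a
    simp [hσ, Equiv.trans_apply, this, hσ₂]
    exact Equiv.swap_apply_of_ne_of_ne hef (Ne.symm hc0)
  have h2 : σ c = f := by
    simp [hσ, Equiv.trans_apply, ← hc'', hσ₂, Equiv.swap_apply_right]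
  have key := Tm_perm μ σ a a c c j
  rw [h1, h2] at key
  exact key.symm

lemma col_norm (W : UG D) (j : Fin D) :
    ∑ a, (W : Matrix (Fin D) (Fin D) ℂ) a j * (starRingEnd ℂ) ((W : Matrix (Fin D) (Fin D) ℂ) a j)
      = 1 := by
  have h := W.2
  rw [Matrix.mem_unitaryGroup_iff'] at h
  have h2 := congrArg (fun A : Matrix (Fin D) (Fin D) ℂ => A j j) h
  simp only [Matrix.mul_apply, Matrix.one_apply_eq, Matrix.star_apply, Complex.star_def] at h2
  rw [← h2]
  exact Finset.sum_congr rfl fun a _ => by ring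

lemma Tm_sum (j : Fin D) : ∑ a, ∑ c, Tm μ a a c c j = 1 := by
  have h1 : ∀ a : Fin D, ∑ c, Tm μ a a c c j = ∫ W, ∑ c, q a a c c j W ∂μ :=
    fun a => (integral_finset_sum _ fun c _ => integrable_q μ a a c c j).symm
  rw [Finset.sum_congr rfl fun a _ => h1 a,
    ← integral_finset_sum _ fun a _ => integrable_finset_sum _ fun c _ => integrable_q μ a a c c j]
  have h2 : ∀ W : UG D, (∑ a, ∑ c, q a a c c j W) = 1 := by
    intro W
    unfold q
    rw [← Finset.sum_mul_sum]
    rw [col_norm W j]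
    norm_num
  rw [integral_congr_ae (Filter.Eventually.of_forall h2)]
  simp

lemma had_relation (hD2 : 2 ≤ D) (j : Fin D) :
    Tm μ ⟨0, by omega⟩ ⟨0, by omega⟩ ⟨0, by omega⟩ ⟨0, by omega⟩ j
      = 2 * Tm μ ⟨0, by omega⟩ ⟨0, by omega⟩ ⟨1, by omega⟩ ⟨1, by omega⟩ j := by
  have h0 : (0 : ℕ) < D := by omega
  have h1 : (1 : ℕ) < D := by omega
  set z0 : Fin D := ⟨0, h0⟩ with hz0
  set z1 : Fin D := ⟨1, h1⟩ with hz1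
  have hz : z0 ≠ z1 := by simp [hz0, hz1, Fin.ext_iff]
  set U : UG D := ⟨had D, had_mem hD2⟩ with hUdef
  set e : Fin 2 → Fin D := ![z0, z1] with he
  -- entry formula
  have hentry : ∀ (W : UG D),
      ((U * W : UG D) : Matrix (Fin D) (Fin D) ℂ) z0 j
        = hs * (W : Matrix (Fin D) (Fin D) ℂ) z0 j + hs * (W : Matrix (Fin D) (Fin D) ℂ) z1 j := by
    intro W
    rw [entry_mul]
    rw [Finset.sum_eq_add z0 z1 hz ?_ (fun h => absurd (Finset.mem_univ z0) h)
      (fun h => absurd (Finset.mem_univ z1) h)]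
    · have e00 : (U : Matrix (Fin D) (Fin D) ℂ) z0 z0 = hs := by
        simp [hUdef, had, hz0]
      have e01 : (U : Matrix (Fin D) (Fin D) ℂ) z0 z1 = hs := by
        simp [hUdef, had, hz0, hz1]
      rw [e00, e01]
    · intro k _ hk
      have hk2 : ¬ ((k : ℕ) ≤ 1) := by
        rcases Nat.lt_or_ge (k : ℕ) 2 with h | h
        · exfalso
          have : (k : ℕ) = 0 ∨ (k : ℕ) = 1 := by omega
          rcases this with h' | h'
          · exact hk.1 (by simp [hz0, Fin.ext_iff, h'])
          · exact hk.2 (by simp [hz1, Fin.ext_iff, h'])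
        · omega
      have hzk : z0 ≠ k := by
        intro hh
        rw [← hh] at hk2
        simp [hz0] at hk2
      have : (U : Matrix (Fin D) (Fin D) ℂ) z0 k = 0 := by
        simp only [hUdef, had]
        rw [if_neg (by tauto), if_neg hzk]
      rw [this, zero_mul]
  -- pointwise expansion
  have expand : ∀ W : UG D, q z0 z0 z0 z0 j (U * W)
      = ∑ x : Fin 2 × Fin 2 × Fin 2 × Fin 2,
          (4 : ℂ)⁻¹ * q (e x.1) (e x.2.1) (e x.2.2.1) (e x.2.2.2) j W := by
    intro W
    unfold q
    rw [hentry W]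
    simp only [Fintype.sum_prod_type, Fin.sum_univ_two]
    simp only [he, Matrix.cons_val_zero, Matrix.cons_val_one, Matrix.head_cons]
    set A := (W : Matrix (Fin D) (Fin D) ℂ) z0 j with hA
    set B := (W : Matrix (Fin D) (Fin D) ℂ) z1 j with hB
    rw [RingHom.map_add, RingHom.map_mul, RingHom.map_mul, hs_conj]
    have h4 : hs * hs * (hs * hs) = (4 : ℂ)⁻¹ := by
      rw [hs_sq]
      norm_num
    set A' := (starRingEnd ℂ) A with hA'
    set B' := (starRingEnd ℂ) B with hB'
    linear_combination ((A + B) * (A' + B') * ((A + B) * (A' + B'))) * h4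
  -- integrate
  have key : Tm μ z0 z0 z0 z0 j
      = ∑ x : Fin 2 × Fin 2 × Fin 2 × Fin 2,
          (4 : ℂ)⁻¹ * Tm μ (e x.1) (e x.2.1) (e x.2.2.1) (e x.2.2.2) j := by
    calc Tm μ z0 z0 z0 z0 j = ∫ W, q z0 z0 z0 z0 j (U * W) ∂μ := (Tm_inv μ U _ _ _ _ j).symm
      _ = ∫ W, ∑ x : Fin 2 × Fin 2 × Fin 2 × Fin 2,
            (4 : ℂ)⁻¹ * q (e x.1) (e x.2.1) (e x.2.2.1) (e x.2.2.2) j W ∂μ :=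
          integral_congr_ae (Filter.Eventually.of_forall expand)
      _ = _ := by
          rw [integral_finset_sum _ fun x _ => (integrable_q μ _ _ _ _ j).const_mul _]
          exact Finset.sum_congr rfl fun x _ => MeasureTheory.integral_const_mul _ _
  simp only [Fintype.sum_prod_type, Fin.sum_univ_two, he, Matrix.cons_val_zero,
    Matrix.cons_val_one, Matrix.head_cons] at key
  -- kill vanishing terms
  have hz' : z1 ≠ z0 := Ne.symm hz
  have v1 : Tm μ z0 z0 z0 z1 j = 0 := Tm_vanish μ j (by tauto) (by tauto)
  have v2 : Tm μ z0 z0 z1 z0 j = 0 := Tm_vanish μ j (by tauto) (by tauto)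
  have v3 : Tm μ z0 z1 z0 z0 j = 0 := Tm_vanish μ j (by tauto) (by tauto)
  have v4 : Tm μ z1 z0 z0 z0 j = 0 := Tm_vanish μ j (by tauto) (by tauto)
  have v5 : Tm μ z1 z1 z1 z0 j = 0 := Tm_vanish μ j (by tauto) (by tauto)
  have v6 : Tm μ z1 z1 z0 z1 j = 0 := Tm_vanish μ j (by tauto) (by tauto)
  have v7 : Tm μ z1 z0 z1 z1 j = 0 := Tm_vanish μ j (by tauto) (by tauto)
  have v8 : Tm μ z0 z1 z1 z1 j = 0 := Tm_vanish μ j (by tauto) (by tauto)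
  have v9 : Tm μ z0 z1 z0 z1 j = 0 := Tm_vanish μ j (by tauto) (by tauto)
  have v10 : Tm μ z1 z0 z1 z0 j = 0 := Tm_vanish μ j (by tauto) (by tauto)
  have s1 : Tm μ z1 z1 z1 z1 j = Tm μ z0 z0 z0 z0 j := Tm_diag μ z1 z0 j
  have s2 : Tm μ z1 z1 z0 z0 j = Tm μ z0 z0 z1 z1 j := Tm_offdiag μ j hz' hz
  have s3 : Tm μ z0 z1 z1 z0 j = Tm μ z0 z0 z1 z1 j := Tm_rearr μ z0 z1 j
  have s4 : Tm μ z1 z0 z0 z1 j = Tm μ z0 z0 z1 z1 j := (Tm_rearr μ z1 z0 j).trans s2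
  rw [v1, v2, v3, v4, v5, v6, v7, v8, v9, v10, s1, s2, s3, s4] at key
  linear_combination (2 : ℂ) * key

/-- value of the off-diagonal moment -/
lemma kappa_val (hD2 : 2 ≤ D) (j : Fin D) :
    Tm μ ⟨0, by omega⟩ ⟨0, by omega⟩ ⟨1, by omega⟩ ⟨1, by omega⟩ j
      = ((D : ℂ) * ((D : ℂ) + 1))⁻¹ := by
  have h0 : (0 : ℕ) < D := by omega
  have h1 : (1 : ℕ) < D := by omega
  set z0 : Fin D := ⟨0, h0⟩ with hz0
  set z1 : Fin D := ⟨1, h1⟩ with hz1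
  have hz : z0 ≠ z1 := by simp [hz0, hz1, Fin.ext_iff]
  set κ := Tm μ z0 z0 z1 z1 j with hκ
  have hsum := Tm_sum μ j
  have heval : ∀ a c : Fin D, Tm μ a a c c j = if a = c then 2 * κ else κ := by
    intro a c
    rcases eq_or_ne a c with h | h
    · rw [if_pos h, ← h]
      rw [Tm_diag μ a z0 j, had_relation μ hD2 j]
    · rw [if_neg h]
      exact Tm_offdiag μ j h hz
  rw [Finset.sum_congr rfl fun a _ => Finset.sum_congr rfl fun c _ => heval a c] at hsum
  have hrow : ∀ a : Fin D, (∑ c, if a = c then 2 * κ else κ) = (D : ℂ) * κ + κ := by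
    intro a
    have : ∀ c : Fin D, (if a = c then 2 * κ else κ) = κ + (if a = c then κ else 0) := by
      intro c
      split_ifs <;> ring
    rw [Finset.sum_congr rfl fun c _ => this c, Finset.sum_add_distrib, Finset.sum_ite_eq]
    simp [Finset.card_univ, mul_comm]
  rw [Finset.sum_congr rfl fun a _ => hrow a, Finset.sum_const, Finset.card_univ] at hsum
  simp only [Fintype.card_fin, nsmul_eq_mul] at hsum
  have hD0 : (D : ℂ) ≠ 0 := by
    simp only [ne_eq, Nat.cast_eq_zero]
    omega
  have hD1 : (D : ℂ) + 1 ≠ 0 := by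
    have : ((D + 1 : ℕ) : ℂ) ≠ 0 := by
      simp only [ne_eq, Nat.cast_eq_zero]
      omega
    simpa using this
  rw [hκ] at *
  field_simp
  linear_combination hsum

/-- The full fourth-moment formula. -/
lemma Tval (hD : 1 ≤ D) (j a b c d : Fin D) :
    Tm μ a b c d j = ((if a = b then (1:ℂ) else 0) * (if c = d then (1:ℂ) else 0)
      + (if a = d then (1:ℂ) else 0) * (if c = b then (1:ℂ) else 0))
        / ((D : ℂ) * ((D : ℂ) + 1)) := by
  by_cases hD2 : 2 ≤ D
  · by_cases hab : a = b
    · by_cases hcd : c = d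
      · subst hab; subst hcd
        rcases eq_or_ne a c with h | h
        · subst h
          rw [Tm_diag μ a ⟨0, by omega⟩ j, had_relation μ hD2 j, kappa_val μ hD2 j]
          simp only [eq_self_iff_true, if_true, mul_one, one_mul]
          rw [div_eq_mul_inv]
          ring
        · rw [Tm_offdiag μ j h (show (⟨0, by omega⟩ : Fin D) ≠ ⟨1, by omega⟩ by
            simp [Fin.ext_iff]), kappa_val μ hD2 j]
          rw [if_pos rfl, if_pos rfl, if_neg h, if_neg (Ne.symm h)]
          simp [div_eq_mul_inv]
      · -- a = b, c ≠ d : zero unless a=d ∧ c=b i.e. a=d∧c=a → c=d, contradiction... check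
        by_cases h2 : a = d ∧ c = b
        · exfalso
          exact hcd (h2.2.trans (hab.symm.trans h2.1))
        · rw [Tm_vanish μ j (fun h => hcd h.2) h2]
          rw [if_pos hab, if_neg hcd]
          have : ¬(a = d ∧ c = b) := h2
          rcases eq_or_ne a d with h3 | h3
          · rw [if_pos h3, if_neg (fun h4 => h2 ⟨h3, h4⟩)]
            simp
          · rw [if_neg h3]
            simp
    · by_cases h2 : a = d ∧ c = b
      · obtain ⟨had', hcb⟩ := h2
        subst had'; subst hcb
        -- Tm a c c a with a ≠ c (since a ≠ b = c)
        have hac : a ≠ c := hab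
        rw [Tm_rearr μ a c j, Tm_offdiag μ j hac (show (⟨0, by omega⟩ : Fin D) ≠ ⟨1, by omega⟩ by
          simp [Fin.ext_iff]), kappa_val μ hD2 j]
        rw [if_neg hac, if_neg (Ne.symm hac), if_pos rfl, if_pos rfl]
        simp [div_eq_mul_inv]
      · rw [Tm_vanish μ j (fun h => hab h.1) h2]
        rw [if_neg hab]
        rcases eq_or_ne a d with h3 | h3
        · rw [if_pos h3, if_neg (fun h4 => h2 ⟨h3, h4⟩)]
          simp
        · rw [if_neg h3]
          simp
  · -- D = 1
    have hD1 : D = 1 := by omega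
    subst hD1
    have hs : Subsingleton (Fin 1) := inferInstance
    have hab : a = b := Subsingleton.elim a b
    have hcd : c = d := Subsingleton.elim c d
    have hadq : a = d := Subsingleton.elim a d
    have hcb : c = b := Subsingleton.elim c b
    rw [if_pos hab, if_pos hcd, if_pos hadq, if_pos hcb]
    norm_num
    have hq : ∀ W : UG 1, q a b c d j W = 1 := by
      intro W
      have h := col_norm W j
      rw [Fin.sum_univ_one] at h
      unfold q
      have h0 : ∀ x : Fin 1, x = 0 := fun x => Subsingleton.elim x 0
      rw [h0 a, h0 b, h0 c, h0 d, h]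
      norm_num
    unfold Tm
    rw [integral_congr_ae (Filter.Eventually.of_forall hq)]
    simp

end HM

open HM

/-- Mixed second-moment identity for Haar-random pure states:
`∫ Tr(M₁ X_W) Tr(M₂ X_W) dμ(W) = (Tr M₁ Tr M₂ + Tr (M₁ M₂)) / (D(D+1))`
where `X_W = W e₀e₀ᴴ Wᴴ`. -/
theorem haar_mixed_second_moment (D : ℕ) (hD : 1 ≤ D)
    (μ : Measure (Matrix.unitaryGroup (Fin D) ℂ))
    [μ.IsHaarMeasure] [IsProbabilityMeasure μ]
    (M₁ M₂ : Matrix (Fin D) (Fin D) ℂ) :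
    (∫ W : Matrix.unitaryGroup (Fin D) ℂ,
        Matrix.trace (M₁ * ((W : Matrix (Fin D) (Fin D) ℂ) *
            Matrix.vecMulVec e0 (star e0) * (W : Matrix (Fin D) (Fin D) ℂ)ᴴ)) *
          Matrix.trace (M₂ * ((W : Matrix (Fin D) (Fin D) ℂ) *
            Matrix.vecMulVec e0 (star e0) * (W : Matrix (Fin D) (Fin D) ℂ)ᴴ)) ∂μ) =
      (Matrix.trace M₁ * Matrix.trace M₂ + Matrix.trace (M₁ * M₂)) /
        ((D : ℂ) * ((D : ℂ) + 1)) := by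
  set j : Fin D := ⟨0, hD⟩ with hj
  have he0 : (e0 : Fin D → ℂ) = fun i => if i = j then 1 else 0 := by
    funext i
    simp [e0, hj, Fin.ext_iff]
  -- the rank-one projector entries
  have hX : ∀ (W : UG D) (r p : Fin D),
      (((W : Matrix (Fin D) (Fin D) ℂ) * Matrix.vecMulVec e0 (star e0)
        * (W : Matrix (Fin D) (Fin D) ℂ)ᴴ) : Matrix (Fin D) (Fin D) ℂ) r p
      = (W : Matrix (Fin D) (Fin D) ℂ) r j
          * (starRingEnd ℂ) ((W : Matrix (Fin D) (Fin D) ℂ) p j) := by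
    intro W r p
    rw [Matrix.mul_apply]
    have hterm : ∀ k, (((W : Matrix (Fin D) (Fin D) ℂ) * Matrix.vecMulVec e0 (star e0) :
          Matrix (Fin D) (Fin D) ℂ)) r k
        * (((W : Matrix (Fin D) (Fin D) ℂ)ᴴ : Matrix (Fin D) (Fin D) ℂ)) k p
        = (if k = j then (1:ℂ) else 0)
          * ((W : Matrix (Fin D) (Fin D) ℂ) r j
              * (starRingEnd ℂ) ((W : Matrix (Fin D) (Fin D) ℂ) p j)) := by
      intro k
      rw [Matrix.mul_apply, Matrix.conjTranspose_apply]
      by_cases hk : k = j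
      · subst hk
        simp only [Matrix.vecMulVec_apply, he0, Pi.star_apply, Complex.star_def,
          apply_ite (starRingEnd ℂ), RingHom.map_one, map_zero, mul_ite, ite_mul,
          mul_zero, zero_mul, mul_one, one_mul, Finset.sum_ite_eq', Finset.mem_univ, if_true]
        try ring
      · simp [Matrix.vecMulVec_apply, he0, Pi.star_apply, Complex.star_def, hk]
    rw [Finset.sum_congr rfl fun k _ => hterm k]
    simp [ite_mul, Finset.sum_ite_eq', zero_mul]
  have htr : ∀ (M : Matrix (Fin D) (Fin D) ℂ) (W : UG D),
      Matrix.trace (M * ((W : Matrix (Fin D) (Fin D) ℂ) *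
          Matrix.vecMulVec e0 (star e0) * (W : Matrix (Fin D) (Fin D) ℂ)ᴴ))
        = ∑ y : Fin D × Fin D, M y.1 y.2 * ((W : Matrix (Fin D) (Fin D) ℂ) y.2 j
            * (starRingEnd ℂ) ((W : Matrix (Fin D) (Fin D) ℂ) y.1 j)) := by
    intro M W
    have hMX : ∀ p, ((M * ((W : Matrix (Fin D) (Fin D) ℂ) *
        Matrix.vecMulVec e0 (star e0) * (W : Matrix (Fin D) (Fin D) ℂ)ᴴ) :
          Matrix (Fin D) (Fin D) ℂ)) p p
        = ∑ r, M p r * ((W : Matrix (Fin D) (Fin D) ℂ) r j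
            * (starRingEnd ℂ) ((W : Matrix (Fin D) (Fin D) ℂ) p j)) := by
      intro p
      rw [Matrix.mul_apply]
      exact Finset.sum_congr rfl fun r _ => by rw [hX W r p]
    rw [Matrix.trace]
    simp only [Matrix.diag]
    rw [Fintype.sum_prod_type]
    exact Finset.sum_congr rfl fun p _ => hMX p
  -- pointwise expansion into a single big sum
  have hpt : ∀ W : UG D,
      Matrix.trace (M₁ * ((W : Matrix (Fin D) (Fin D) ℂ) *
          Matrix.vecMulVec e0 (star e0) * (W : Matrix (Fin D) (Fin D) ℂ)ᴴ)) *
        Matrix.trace (M₂ * ((W : Matrix (Fin D) (Fin D) ℂ) *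
          Matrix.vecMulVec e0 (star e0) * (W : Matrix (Fin D) (Fin D) ℂ)ᴴ))
      = ∑ z : (Fin D × Fin D) × Fin D × Fin D,
          (M₁ z.1.1 z.1.2 * M₂ z.2.1 z.2.2) * q z.1.2 z.1.1 z.2.2 z.2.1 j W := by
    intro W
    rw [htr M₁ W, htr M₂ W, Finset.sum_mul_sum]
    simp only [Fintype.sum_prod_type]
    refine Finset.sum_congr rfl fun p _ => Finset.sum_congr rfl fun r _ =>
      Finset.sum_congr rfl fun u _ => Finset.sum_congr rfl fun v _ => ?_
    unfold q
    ring
  rw [integral_congr_ae (Filter.Eventually.of_forall hpt)]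
  rw [integral_finset_sum _ fun z _ => (integrable_q μ _ _ _ _ j).const_mul _]
  have hterm : ∀ z : (Fin D × Fin D) × Fin D × Fin D,
      (∫ W, (M₁ z.1.1 z.1.2 * M₂ z.2.1 z.2.2) * q z.1.2 z.1.1 z.2.2 z.2.1 j W ∂μ)
        = (M₁ z.1.1 z.1.2 * M₂ z.2.1 z.2.2)
          * (((if z.1.2 = z.1.1 then (1:ℂ) else 0) * (if z.2.2 = z.2.1 then (1:ℂ) else 0)
            + (if z.1.2 = z.2.1 then (1:ℂ) else 0) * (if z.2.2 = z.1.1 then (1:ℂ) else 0))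
              / ((D : ℂ) * ((D : ℂ) + 1))) := by
    intro z
    rw [MeasureTheory.integral_const_mul]
    rw [show (∫ W, q z.1.2 z.1.1 z.2.2 z.2.1 j W ∂μ) = Tm μ z.1.2 z.1.1 z.2.2 z.2.1 j from rfl]
    rw [Tval μ hD j _ _ _ _]
  rw [Finset.sum_congr rfl fun z _ => hterm z]
  -- now a purely algebraic computation
  have split : ∀ z : (Fin D × Fin D) × Fin D × Fin D,
      (M₁ z.1.1 z.1.2 * M₂ z.2.1 z.2.2)
        * (((if z.1.2 = z.1.1 then (1:ℂ) else 0) * (if z.2.2 = z.2.1 then (1:ℂ) else 0)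
          + (if z.1.2 = z.2.1 then (1:ℂ) else 0) * (if z.2.2 = z.1.1 then (1:ℂ) else 0))
            / ((D : ℂ) * ((D : ℂ) + 1)))
      = (M₁ z.1.1 z.1.2 * (if z.1.2 = z.1.1 then (1:ℂ) else 0))
          * (M₂ z.2.1 z.2.2 * (if z.2.2 = z.2.1 then (1:ℂ) else 0)) * ((D : ℂ) * ((D : ℂ) + 1))⁻¹
        + (M₁ z.1.1 z.1.2 * M₂ z.2.1 z.2.2 * ((if z.1.2 = z.2.1 then (1:ℂ) else 0)
            * (if z.2.2 = z.1.1 then (1:ℂ) else 0))) * ((D : ℂ) * ((D : ℂ) + 1))⁻¹ := by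
    intro z
    rw [div_eq_mul_inv]
    ring
  rw [Finset.sum_congr rfl fun z _ => split z, Finset.sum_add_distrib]
  rw [← Finset.sum_mul, ← Finset.sum_mul]
  have hS1 : (∑ z : (Fin D × Fin D) × Fin D × Fin D,
      (M₁ z.1.1 z.1.2 * (if z.1.2 = z.1.1 then (1:ℂ) else 0))
        * (M₂ z.2.1 z.2.2 * (if z.2.2 = z.2.1 then (1:ℂ) else 0)))
      = Matrix.trace M₁ * Matrix.trace M₂ := by
    calc (∑ z : (Fin D × Fin D) × Fin D × Fin D,
        (M₁ z.1.1 z.1.2 * (if z.1.2 = z.1.1 then (1:ℂ) else 0))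
          * (M₂ z.2.1 z.2.2 * (if z.2.2 = z.2.1 then (1:ℂ) else 0)))
        = ∑ y1 : Fin D × Fin D, ∑ y2 : Fin D × Fin D,
            (M₁ y1.1 y1.2 * (if y1.2 = y1.1 then (1:ℂ) else 0))
              * (M₂ y2.1 y2.2 * (if y2.2 = y2.1 then (1:ℂ) else 0)) :=
          Fintype.sum_prod_type (f := fun z : (Fin D × Fin D) × Fin D × Fin D =>
            (M₁ z.1.1 z.1.2 * (if z.1.2 = z.1.1 then (1:ℂ) else 0))
              * (M₂ z.2.1 z.2.2 * (if z.2.2 = z.2.1 then (1:ℂ) else 0)))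
      _ = (∑ y1 : Fin D × Fin D, M₁ y1.1 y1.2 * (if y1.2 = y1.1 then (1:ℂ) else 0))
            * (∑ y2 : Fin D × Fin D, M₂ y2.1 y2.2 * (if y2.2 = y2.1 then (1:ℂ) else 0)) :=
          (Finset.sum_mul_sum _ _ _ _).symm
      _ = Matrix.trace M₁ * Matrix.trace M₂ := by
          congr 1
          · rw [Matrix.trace]
            simp only [Fintype.sum_prod_type, Matrix.diag]
            exact Finset.sum_congr rfl fun p _ => by
              simp [mul_ite, Finset.sum_ite_eq', Finset.sum_ite_eq]
          · rw [Matrix.trace]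
            simp only [Fintype.sum_prod_type, Matrix.diag]
            exact Finset.sum_congr rfl fun p _ => by
              simp [mul_ite, Finset.sum_ite_eq', Finset.sum_ite_eq]
  have hS2 : (∑ z : (Fin D × Fin D) × Fin D × Fin D,
      M₁ z.1.1 z.1.2 * M₂ z.2.1 z.2.2 * ((if z.1.2 = z.2.1 then (1:ℂ) else 0)
        * (if z.2.2 = z.1.1 then (1:ℂ) else 0)))
      = Matrix.trace (M₁ * M₂) := by
    rw [Matrix.trace]
    simp only [Fintype.sum_prod_type, Matrix.diag, Matrix.mul_apply]
    simp [mul_ite, ite_mul, mul_zero, zero_mul, Finset.sum_ite_eq', Finset.sum_ite_eq,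
      Finset.mul_sum, Finset.sum_mul]
  rw [hS1, hS2, div_eq_mul_inv]
  ring
end
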